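/- arXiv:1111.1294 — 5 statements merged into one kernel-verified Lean document; each statement's English description precedes it below -/
import Mathlib

section
/- Suppose S has γ-rectangular Apéry set (Ap(S) = Γ). Then every representation ω = Σ_{i=2}^ν λ_i g_i of an element ω ∈ Ap(S) with λ_i ≤ γ_i for all i is a maximal representation. -/
open Finset

/-- `S` is a numerical semigroup: a submonoid of `(ℕ, +)` with finite complement. -/
def IsNumSgp (S : Set ℕ) : Prop :=
  0 ∈ S ∧ (∀ a ∈ S, ∀ b ∈ S, a + b ∈ S) ∧ (Sᶜ : Set ℕ).Finite

/-- `s` belongs to the Apéry set of `S` with respect to `m`: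
`s ∈ S` and `s - m ∉ S` (i.e. no `u ∈ S` with `u + m = s`). -/
def InApery (S : Set ℕ) (m s : ℕ) : Prop :=
  s ∈ S ∧ ∀ u ∈ S, u + m ≠ s

def AperySet (S : Set ℕ) (m : ℕ) : Set ℕ := {s | InApery S m s}

/-- `ordS S s` is the largest `h` such that `s` is a sum of `h` nonzero elements of `S`. -/
noncomputable def ordS (S : Set ℕ) (s : ℕ) : ℕ :=
  sSup {h : ℕ | ∃ f : Fin h → ℕ, (∀ j, f j ∈ S ∧ f j ≠ 0) ∧ ∑ j, f j = s}

/-- `g` generates `S`. -/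
def Generates (S : Set ℕ) {ν : ℕ} (g : Fin ν → ℕ) : Prop :=
  ∀ s, s ∈ S ↔ ∃ lam : Fin ν → ℕ, ∑ i, lam i * g i = s

/-- `g` is a minimal generating system of `S`: it generates `S`
and no `g i` is generated by the remaining generators. -/
def MinimalGen (S : Set ℕ) {ν : ℕ} (g : Fin ν → ℕ) : Prop :=
  Generates S g ∧ ∀ i, ¬ ∃ lam : Fin ν → ℕ, lam i = 0 ∧ ∑ j, lam j * g j = g i

/-- `lam` is a maximal representation of `s`: the coefficient sum equals `ordS S s`. -/
def IsMaxRep (S : Set ℕ) {ν : ℕ} (g : Fin ν → ℕ) (lam : Fin ν → ℕ) (s : ℕ) : Prop :=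
  ∑ i, lam i * g i = s ∧ ∑ i, lam i = ordS S s

/-- `s` has a unique maximal representation. -/
def UniqueMaxRep (S : Set ℕ) {ν : ℕ} (g : Fin ν → ℕ) (s : ℕ) : Prop :=
  ∃! lam : Fin ν → ℕ, IsMaxRep S g lam s

/-- `β_i = max {h | h g_i ∈ Ap(S) and ord(h g_i) = h}`. -/
noncomputable def betaN (S : Set ℕ) (m : ℕ) {ν : ℕ} (g : Fin ν → ℕ) (i : Fin ν) : ℕ :=
  sSup {h : ℕ | InApery S m (h * g i) ∧ ordS S (h * g i) = h}

/-- `γ_i = max {h | h g_i ∈ Ap(S), ord(h g_i) = h and h g_i has a unique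
maximal representation}`. -/
noncomputable def gammaN (S : Set ℕ) (m : ℕ) {ν : ℕ} (g : Fin ν → ℕ) (i : Fin ν) : ℕ :=
  sSup {h : ℕ | InApery S m (h * g i) ∧ ordS S (h * g i) = h ∧ UniqueMaxRep S g (h * g i)}

/-- `B = {Σ_{i≥2} λ_i g_i : 0 ≤ λ_i ≤ β_i}`. -/
def Bset (S : Set ℕ) (m : ℕ) {ν : ℕ} [NeZero ν] (g : Fin ν → ℕ) : Set ℕ :=
  {s | ∃ lam : Fin ν → ℕ, lam 0 = 0 ∧ (∀ i, lam i ≤ betaN S m g i) ∧ ∑ i, lam i * g i = s}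

/-- `Γ = {Σ_{i≥2} λ_i g_i : 0 ≤ λ_i ≤ γ_i}`. -/
def GammaSet (S : Set ℕ) (m : ℕ) {ν : ℕ} [NeZero ν] (g : Fin ν → ℕ) : Set ℕ :=
  {s | ∃ lam : Fin ν → ℕ, lam 0 = 0 ∧ (∀ i, lam i ≤ gammaN S m g i) ∧ ∑ i, lam i * g i = s}

/-- `s ⪯_M t`. -/
def predM (S : Set ℕ) (s t : ℕ) : Prop :=
  ∃ u ∈ S, s + u = t ∧ ordS S s + ordS S u = ordS S t


section AuxOrd

/-- The set whose supremum is `ordS`. -/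
def OSet (S : Set ℕ) (s : ℕ) : Set ℕ :=
  {h : ℕ | ∃ f : Fin h → ℕ, (∀ j, f j ∈ S ∧ f j ≠ 0) ∧ ∑ j, f j = s}

lemma ordS_eq_sSup (S : Set ℕ) (s : ℕ) : ordS S s = sSup (OSet S s) := rfl

lemma oset_le {S : Set ℕ} {h s : ℕ} (hh : h ∈ OSet S s) : h ≤ s := by
  obtain ⟨f, hf, hsum⟩ := hh
  calc h = ∑ _j : Fin h, 1 := by simp
  _ ≤ ∑ j, f j := Finset.sum_le_sum fun j _ => Nat.one_le_iff_ne_zero.2 (hf j).2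
  _ = s := hsum

lemma oset_bdd {S : Set ℕ} {s : ℕ} : BddAbove (OSet S s) := ⟨s, fun _ hx => oset_le hx⟩

lemma oset_add {S : Set ℕ} {a b s t : ℕ} (ha : a ∈ OSet S s) (hb : b ∈ OSet S t) :
    a + b ∈ OSet S (s + t) := by
  obtain ⟨f1, hf1, h1⟩ := ha
  obtain ⟨f2, hf2, h2⟩ := hb
  refine ⟨Fin.addCases f1 f2, ?_, ?_⟩
  · intro j
    induction j using Fin.addCases with
    | left i => simpa using hf1 i
    | right i => simpa using hf2 i
  · rw [Fin.sum_univ_add]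
    simp only [Fin.addCases_left, Fin.addCases_right, h1, h2]

lemma zero_mem_oset {S : Set ℕ} : (0 : ℕ) ∈ OSet S 0 :=
  ⟨Fin.elim0, fun j => j.elim0, by simp⟩

lemma single_mem_oset {S : Set ℕ} {ν : ℕ} {g : Fin ν → ℕ} (hgS : ∀ i, g i ∈ S)
    (hgpos : ∀ i, 0 < g i) (i : Fin ν) (n : ℕ) : n ∈ OSet S (n * g i) := by
  induction n with
  | zero => simpa using (zero_mem_oset (S := S))
  | succ n ih =>
      have h1 : 1 ∈ OSet S (g i) :=
        ⟨fun _ => g i, fun _ => ⟨hgS i, (hgpos i).ne'⟩, by simp⟩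
      have h2 := oset_add ih h1
      have e : n * g i + g i = (n + 1) * g i := by ring
      rwa [e] at h2

lemma rep_mem_oset {S : Set ℕ} {ν : ℕ} {g : Fin ν → ℕ} (hgS : ∀ i, g i ∈ S)
    (hgpos : ∀ i, 0 < g i) (lam : Fin ν → ℕ) :
    (∑ i, lam i) ∈ OSet S (∑ i, lam i * g i) := by
  classical
  have key : ∀ t : Finset (Fin ν), (∑ i ∈ t, lam i) ∈ OSet S (∑ i ∈ t, lam i * g i) := by
    intro t
    induction t using Finset.induction_on with
    | empty => simpa using (zero_mem_oset (S := S))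
    | insert _ _ ha ih =>
        rw [Finset.sum_insert ha, Finset.sum_insert ha]
        exact oset_add (single_mem_oset hgS hgpos _ _) ih
  exact key univ

lemma oset_rep {S : Set ℕ} {ν : ℕ} {g : Fin ν → ℕ} (hgen : Generates S g) {h s : ℕ}
    (hh : h ∈ OSet S s) : ∃ ρ : Fin ν → ℕ, ∑ i, ρ i * g i = s ∧ h ≤ ∑ i, ρ i := by
  obtain ⟨f, hf, hsum⟩ := hh
  choose c hc using fun j => (hgen (f j)).1 (hf j).1
  refine ⟨fun i => ∑ j, c j i, ?_, ?_⟩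
  · calc ∑ i, (∑ j, c j i) * g i = ∑ i, ∑ j, c j i * g i := by
          exact Finset.sum_congr rfl fun i _ => Finset.sum_mul ..
    _ = ∑ j, ∑ i, c j i * g i := Finset.sum_comm
    _ = ∑ j, f j := Finset.sum_congr rfl fun j _ => hc j
    _ = s := hsum
  · calc h = ∑ _j : Fin h, 1 := by simp
    _ ≤ ∑ j, ∑ i, c j i := by
        refine Finset.sum_le_sum fun j _ => ?_
        rw [Nat.one_le_iff_ne_zero]
        intro hz
        have hall : ∀ i ∈ (univ : Finset (Fin ν)), c j i = 0 :=
          (Finset.sum_eq_zero_iff).1 hz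
        have : f j = 0 := by
          rw [← hc j]
          exact Finset.sum_eq_zero fun i hi => by rw [hall i hi, zero_mul]
        exact (hf j).2 this
    _ = ∑ i, ∑ j, c j i := Finset.sum_comm

end AuxOrd

section Main

variable (S : Set ℕ) {ν : ℕ} [NeZero ν] (g : Fin ν → ℕ)

lemma gpos_of (hmono : StrictMono g) (hmpos : 0 < g 0) : ∀ i, 0 < g i := by
  intro i
  rcases eq_or_ne i 0 with rfl | h
  · exact hmpos
  · exact hmpos.trans (hmono ((Fin.pos_iff_ne_zero' i).2 h))

lemma gmem_of (hgen : Generates S g) : ∀ i, g i ∈ S := by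
  intro i
  refine (hgen (g i)).2 ⟨fun j => if j = i then 1 else 0, ?_⟩
  simp [ite_mul]

lemma gammaN_zero_eq (hgen : Generates S g) (hmpos : 0 < g 0) :
    gammaN S (g 0) g 0 = 0 := by
  have hsub : {h : ℕ | InApery S (g 0) (h * g 0) ∧ ordS S (h * g 0) = h ∧
      UniqueMaxRep S g (h * g 0)} ⊆ {0} := by
    intro h hh
    simp only [Set.mem_setOf_eq] at hh
    simp only [Set.mem_singleton_iff]
    by_contra hne
    obtain ⟨n, rfl⟩ : ∃ n, h = n + 1 := ⟨h - 1, by omega⟩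
    have hu : n * g 0 ∈ S := (hgen _).2 ⟨fun j => if j = 0 then n else 0, by simp [ite_mul]⟩
    exact hh.1.2 (n * g 0) hu (by ring)
  rcases Set.subset_singleton_iff_eq.mp hsub with he | he
  · show sSup _ = 0
    rw [he]
    exact csSup_empty
  · show sSup _ = 0
    rw [he]
    exact csSup_singleton 0

set_option maxHeartbeats 1600000 in
/-- Key lemma: every representation of `M = ∑ γ_i g_i` has coefficient sum at most `∑ γ_i`. -/
lemma main_bound (hS : IsNumSgp S) (hgen : Generates S g) (hmono : StrictMono g)
    (hmpos : 0 < g 0) (hrect : AperySet S (g 0) = GammaSet S (g 0) g)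
    (ρ : Fin ν → ℕ) (hρ : ∑ i, ρ i * g i = ∑ i, gammaN S (g 0) g i * g i) :
    ∑ i, ρ i ≤ ∑ i, gammaN S (g 0) g i := by
  classical
  have hgpos : ∀ i, 0 < g i := gpos_of g hmono hmpos
  have hgS : ∀ i, g i ∈ S := gmem_of S g hgen
  have hcomb : ∀ lam : Fin ν → ℕ, (∑ i, lam i * g i) ∈ S := fun lam => (hgen _).2 ⟨lam, rfl⟩
  set gam : Fin ν → ℕ := gammaN S (g 0) g with hgamdef
  set M : ℕ := ∑ i, gam i * g i with hMdef
  -- bound on Apery elements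
  obtain ⟨N, hN⟩ : ∃ N, ∀ x, InApery S (g 0) x → x ≤ N := by
    obtain ⟨N, hN⟩ := hS.2.2.bddAbove
    refine ⟨N + g 0, fun x hx => ?_⟩
    by_contra hc
    push_neg at hc
    have hxm : x - g 0 ∈ S := by
      by_contra h2
      have := hN h2
      omega
    exact hx.2 (x - g 0) hxm (by omega)
  -- M is in the Apery set
  have hgam0 : gam 0 = 0 := gammaN_zero_eq S g hgen hmpos
  have hMA : InApery S (g 0) M := by
    have h1 : M ∈ GammaSet S (g 0) g := ⟨gam, hgam0, fun i => le_rfl, rfl⟩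
    rw [← hrect] at h1
    exact h1
  -- the set of coefficient sums of representations of M
  set R : Set ℕ := {t | ∃ τ : Fin ν → ℕ, (∑ i, τ i * g i = M) ∧ (∑ i, τ i) = t} with hRdef
  have hRmem : (∑ i, gam i) ∈ R := ⟨gam, rfl, rfl⟩
  have hRbdd : BddAbove R := by
    refine ⟨M, ?_⟩
    rintro t ⟨τ, h1, rfl⟩
    calc ∑ i, τ i ≤ ∑ i, τ i * g i :=
          Finset.sum_le_sum fun i _ => Nat.le_mul_of_pos_right _ (hgpos i)
    _ = M := h1
  set d : ℕ := sSup R with hddef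
  have hdmem : d ∈ R := Nat.sSup_mem ⟨_, hRmem⟩ hRbdd
  suffices hdle : d ≤ ∑ i, gam i by
    have h1 : (∑ i, ρ i) ∈ R := ⟨ρ, hρ, rfl⟩
    exact le_trans (le_csSup hRbdd h1) hdle
  -- pick a representation with sum d maximizing Ψ = ∑ μ_i g_i²
  set Q : Set ℕ := {v | ∃ μ : Fin ν → ℕ, (∑ i, μ i * g i = M) ∧ (∑ i, μ i = d) ∧
      (∑ i, μ i * g i ^ 2 = v)} with hQdef
  obtain ⟨μd, hμd1, hμd2⟩ := hdmem
  have hQne : Q.Nonempty := ⟨_, μd, hμd1, hμd2, rfl⟩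
  have hQbdd : BddAbove Q := by
    refine ⟨M * ∑ j, g j, ?_⟩
    rintro v ⟨μ, h1, h2, rfl⟩
    calc ∑ i, μ i * g i ^ 2 = ∑ i, (μ i * g i) * g i := by
          exact Finset.sum_congr rfl fun i _ => by ring
    _ ≤ ∑ i, (μ i * g i) * (∑ j, g j) :=
        Finset.sum_le_sum fun i _ => Nat.mul_le_mul_left _
          (Finset.single_le_sum (fun j _ => Nat.zero_le _) (mem_univ i))
    _ = (∑ i, μ i * g i) * (∑ j, g j) := (Finset.sum_mul ..).symm
    _ = M * ∑ j, g j := by rw [h1]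
  obtain ⟨μ, hμg, hμs, hμv⟩ : sSup Q ∈ Q := Nat.sSup_mem hQne hQbdd
  have hkey : ∀ k, μ k ≤ gam k := by
    intro k
    by_contra hk
    push_neg at hk
    set h : ℕ := gam k + 1 with hhdef
    have hhk : h ≤ μ k := hk
    set μ₀ : Fin ν → ℕ := fun i => if i = k then μ k - h else μ i with hμ₀def
    have hμ₀k : μ₀ k = μ k - h := by simp [hμ₀def]
    have hμ₀ne : ∀ i ∈ univ.erase k, μ₀ i = μ i := fun i hi => by
      simp [hμ₀def, Finset.ne_of_mem_erase hi]
    -- splitting sums at k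
    have eg1 : ∑ i, μ i * g i = μ k * g k + ∑ i ∈ univ.erase k, μ i * g i :=
      (Finset.add_sum_erase _ _ (mem_univ k)).symm
    have eg2 : ∑ i, μ₀ i * g i = (μ k - h) * g k + ∑ i ∈ univ.erase k, μ i * g i := by
      rw [← Finset.add_sum_erase _ _ (mem_univ k), hμ₀k]
      congr 1
      exact Finset.sum_congr rfl fun i hi => by rw [hμ₀ne i hi]
    have egc : (μ k - h) * g k + h * g k = μ k * g k := by
      rw [← Nat.add_mul, Nat.sub_add_cancel hhk]
    have hsplitg : ∑ i, μ₀ i * g i + h * g k = M := by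
      rw [← hμg, eg1, eg2]; linarith
    have es1 : ∑ i, μ i = μ k + ∑ i ∈ univ.erase k, μ i :=
      (Finset.add_sum_erase _ _ (mem_univ k)).symm
    have es2 : ∑ i, μ₀ i = (μ k - h) + ∑ i ∈ univ.erase k, μ i := by
      rw [← Finset.add_sum_erase _ _ (mem_univ k), hμ₀k]
      congr 1
      exact Finset.sum_congr rfl fun i hi => by rw [hμ₀ne i hi]
    have hsplits : ∑ i, μ₀ i + h = d := by
      rw [← hμs, es1, es2]; omega
    have hsS : (∑ i, μ₀ i * g i) ∈ S := hcomb μ₀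
    have hkS : h * g k ∈ S := (hgen _).2 ⟨fun i => if i = k then h else 0, by simp [ite_mul]⟩
    -- h g_k is in the Apery set
    have hhgk : InApery S (g 0) (h * g k) := by
      refine ⟨hkS, fun u hu heq => ?_⟩
      refine hMA.2 (u + ∑ i, μ₀ i * g i) (hS.2.1 u hu _ hsS) ?_
      linarith
    -- ord (h g_k) = h
    have hup : h ∈ OSet S (h * g k) := by
      have h1 := rep_mem_oset hgS hgpos (fun i => if i = k then h else 0)
      simpa [ite_mul] using h1
    have hdown : ∀ h' ∈ OSet S (h * g k), h' ≤ h := by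
      intro h' hh'
      obtain ⟨σ', hσ'g, hσ's⟩ := oset_rep hgen hh'
      have hmem : (∑ i, μ₀ i + ∑ i, σ' i) ∈ R := by
        refine ⟨fun i => μ₀ i + σ' i, ?_, Finset.sum_add_distrib⟩
        have e : ∑ i, (μ₀ i + σ' i) * g i = ∑ i, μ₀ i * g i + ∑ i, σ' i * g i := by
          rw [← Finset.sum_add_distrib]
          exact Finset.sum_congr rfl fun i _ => by ring
        rw [e, hσ'g]
        exact hsplitg
      have hled : ∑ i, μ₀ i + ∑ i, σ' i ≤ d := le_csSup hRbdd hmem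
      omega
    have hordk : ordS S (h * g k) = h := by
      rw [ordS_eq_sSup]
      exact le_antisymm (csSup_le ⟨h, hup⟩ hdown) (le_csSup oset_bdd hup)
    -- the maximal representation of h g_k is not unique
    have hnu : ¬ UniqueMaxRep S g (h * g k) := by
      intro huniq
      have hmem : h ∈ {h' : ℕ | InApery S (g 0) (h' * g k) ∧ ordS S (h' * g k) = h' ∧
          UniqueMaxRep S g (h' * g k)} := ⟨hhgk, hordk, huniq⟩
      have hbdd : BddAbove {h' : ℕ | InApery S (g 0) (h' * g k) ∧ ordS S (h' * g k) = h' ∧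
          UniqueMaxRep S g (h' * g k)} := by
        refine ⟨N, fun h' hh' => ?_⟩
        calc h' ≤ h' * g k := Nat.le_mul_of_pos_right _ (hgpos k)
        _ ≤ N := hN _ hh'.1
      have : h ≤ gammaN S (g 0) g k := le_csSup hbdd hmem
      have : h ≤ gam k := this
      omega
    have hmax0 : IsMaxRep S g (fun i => if i = k then h else 0) (h * g k) := by
      constructor
      · simp [ite_mul]
      · simp [hordk]
    obtain ⟨σ, hσmax, hσne⟩ : ∃ σ, IsMaxRep S g σ (h * g k) ∧
        σ ≠ (fun i => if i = k then h else 0) := by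
      unfold UniqueMaxRep ExistsUnique at hnu
      push_neg at hnu
      exact hnu _ hmax0
    obtain ⟨hσg, hσs⟩ := hσmax
    rw [hordk] at hσs
    -- σ has support outside k
    obtain ⟨j, hjk, hj0⟩ : ∃ j, j ≠ k ∧ σ j ≠ 0 := by
      by_contra hcon
      push_neg at hcon
      apply hσne
      funext i
      by_cases hik : i = k
      · subst hik
        simp only [if_pos rfl]
        have e : ∑ i, σ i * g i = σ i * g i := by
          rw [← Finset.add_sum_erase _ _ (mem_univ i)]
          rw [Finset.sum_eq_zero fun l hl => by
            rw [hcon l (Finset.ne_of_mem_erase hl), zero_mul]]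
          ring
        have : σ i * g i = h * g i := by rw [← e, hσg]
        exact Nat.eq_of_mul_eq_mul_right (hgpos i) this
      · simp [hik, hcon i hik]
    -- Jensen: ∑ σ_i g_i² > h g_k²
    have hJ : h * g k ^ 2 + 1 ≤ ∑ i, σ i * g i ^ 2 := by
      have e1 : ∑ i, (σ i : ℤ) * ((g i : ℤ) - (g k : ℤ)) ^ 2
          = (∑ i, (σ i : ℤ) * (g i : ℤ) ^ 2) - 2 * (g k : ℤ) * (∑ i, (σ i : ℤ) * (g i : ℤ))
            + (g k : ℤ) ^ 2 * (∑ i, (σ i : ℤ)) := by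
        rw [Finset.mul_sum, Finset.mul_sum, ← Finset.sum_sub_distrib, ← Finset.sum_add_distrib]
        exact Finset.sum_congr rfl fun i _ => by ring
      have e2 : (∑ i, (σ i : ℤ) * (g i : ℤ)) = (h : ℤ) * (g k : ℤ) := by
        exact_mod_cast congrArg (fun n : ℕ => (n : ℤ)) hσg
      have e3 : (∑ i, (σ i : ℤ)) = (h : ℤ) := by
        exact_mod_cast congrArg (fun n : ℕ => (n : ℤ)) hσs
      have e4 : (1 : ℤ) ≤ (σ j : ℤ) * ((g j : ℤ) - (g k : ℤ)) ^ 2 := by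
        have h1 : (1 : ℤ) ≤ (σ j : ℤ) := by exact_mod_cast Nat.one_le_iff_ne_zero.2 hj0
        have h2 : (g j : ℤ) - (g k : ℤ) ≠ 0 := by
          have hne := hmono.injective.ne hjk
          intro hcc
          exact hne (by exact_mod_cast (by linarith : (g j : ℤ) = (g k : ℤ)))
        have h3 : (1 : ℤ) ≤ ((g j : ℤ) - (g k : ℤ)) ^ 2 := by
          rcases h2.lt_or_gt with hlt | hlt
          · nlinarith
          · nlinarith
        nlinarith
      have e5 : (1 : ℤ) ≤ ∑ i, (σ i : ℤ) * ((g i : ℤ) - (g k : ℤ)) ^ 2 :=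
        le_trans e4 (Finset.single_le_sum (f := fun i => (σ i : ℤ) * ((g i : ℤ) - (g k : ℤ)) ^ 2)
          (fun i _ => by positivity) (mem_univ j))
      rw [e1, e2, e3] at e5
      have e6 : ((h * g k ^ 2 + 1 : ℕ) : ℤ) ≤ ((∑ i, σ i * g i ^ 2 : ℕ) : ℤ) := by
        push_cast
        push_cast at e5
        ring_nf
        ring_nf at e5
        linarith
      exact_mod_cast e6
    -- build the new representation and contradict maximality of Ψ
    have hμ'Q : (∑ i, μ₀ i * g i ^ 2 + ∑ i, σ i * g i ^ 2) ∈ Q := by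
      refine ⟨fun i => μ₀ i + σ i, ?_, ?_, ?_⟩
      · have e : ∑ i, (μ₀ i + σ i) * g i = ∑ i, μ₀ i * g i + ∑ i, σ i * g i := by
          rw [← Finset.sum_add_distrib]
          exact Finset.sum_congr rfl fun i _ => by ring
        rw [e, hσg]
        exact hsplitg
      · rw [Finset.sum_add_distrib, hσs]
        exact hsplits
      · rw [← Finset.sum_add_distrib]
        exact Finset.sum_congr rfl fun i _ => by ring
    have hψsplit : ∑ i, μ i * g i ^ 2 = ∑ i, μ₀ i * g i ^ 2 + h * g k ^ 2 := by
      have f1 : ∑ i, μ i * g i ^ 2 = μ k * g k ^ 2 + ∑ i ∈ univ.erase k, μ i * g i ^ 2 :=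
        (Finset.add_sum_erase _ _ (mem_univ k)).symm
      have f2 : ∑ i, μ₀ i * g i ^ 2 = (μ k - h) * g k ^ 2 + ∑ i ∈ univ.erase k, μ i * g i ^ 2 := by
        rw [← Finset.add_sum_erase _ _ (mem_univ k), hμ₀k]
        congr 1
        exact Finset.sum_congr rfl fun i hi => by rw [hμ₀ne i hi]
      have f3 : (μ k - h) * g k ^ 2 + h * g k ^ 2 = μ k * g k ^ 2 := by
        rw [← Nat.add_mul, Nat.sub_add_cancel hhk]
      rw [f1, f2]; linarith
    have hfin : ∑ i, μ₀ i * g i ^ 2 + ∑ i, σ i * g i ^ 2 ≤ sSup Q := le_csSup hQbdd hμ'Q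
    rw [← hμv, hψsplit] at hfin
    omega
  calc d = ∑ i, μ i := hμs.symm
  _ ≤ ∑ i, gam i := Finset.sum_le_sum fun i _ => hkey i

end Main

theorem gammaRect_rep_is_maximal (S : Set ℕ) {ν : ℕ} [NeZero ν] (g : Fin ν → ℕ) (hν : 2 ≤ ν)
    (hS : IsNumSgp S) (hgen : MinimalGen S g) (hmono : StrictMono g)
    (hmpos : 0 < g 0) (hmul : ∀ s ∈ S, s ≠ 0 → g 0 ≤ s)
    (hrect : AperySet S (g 0) = GammaSet S (g 0) g)
    (ω : ℕ) (hω : InApery S (g 0) ω) (lam : Fin ν → ℕ) (hlam0 : lam 0 = 0)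
    (hle : ∀ i, lam i ≤ gammaN S (g 0) g i) (hrep : ∑ i, lam i * g i = ω) :
    ∑ i, lam i = ordS S ω := by
  classical
  have hgpos : ∀ i, 0 < g i := gpos_of g hmono hmpos
  have hgS : ∀ i, g i ∈ S := gmem_of S g hgen.1
  have hmain := main_bound S g hS hgen.1 hmono hmpos hrect
  have hup : (∑ i, lam i) ∈ OSet S ω := by
    have h1 := rep_mem_oset hgS hgpos lam
    rwa [hrep] at h1
  have hle2 : ∀ h ∈ OSet S ω, h ≤ ∑ i, lam i := by
    intro h hh
    obtain ⟨ρ, hρg, hρs⟩ := oset_rep hgen.1 hh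
    set δ : Fin ν → ℕ := fun i => gammaN S (g 0) g i - lam i with hδ
    have hfix : ∀ i, lam i + δ i = gammaN S (g 0) g i := fun i =>
      Nat.add_sub_cancel' (hle i)
    have e2 : ∑ i, gammaN S (g 0) g i * g i = ∑ i, lam i * g i + ∑ i, δ i * g i := by
      rw [← Finset.sum_add_distrib]
      exact Finset.sum_congr rfl fun i _ => by rw [← Nat.add_mul, hfix i]
    have hpad : ∑ i, (ρ i + δ i) * g i = ∑ i, gammaN S (g 0) g i * g i := by
      have e1 : ∑ i, (ρ i + δ i) * g i = ∑ i, ρ i * g i + ∑ i, δ i * g i := by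
        rw [← Finset.sum_add_distrib]
        exact Finset.sum_congr rfl fun i _ => by ring
      rw [e1, hρg, e2, hrep]
    have hb := hmain _ hpad
    have e3 : ∑ i, (ρ i + δ i) = ∑ i, ρ i + ∑ i, δ i := Finset.sum_add_distrib
    have e4 : ∑ i, gammaN S (g 0) g i = ∑ i, lam i + ∑ i, δ i := by
      rw [← Finset.sum_add_distrib]
      exact Finset.sum_congr rfl fun i _ => (hfix i).symm
    linarith
  rw [ordS_eq_sSup]
  exact le_antisymm (le_csSup oset_bdd hup) (csSup_le ⟨_, hup⟩ hle2)
end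

section
/- The Apéry set of S is γ-rectangular if and only if f + m = Σ_{i=2}^ν γ_i g_i, and this holds if and only if m = Π_{i=2}^ν (γ_i + 1). -/
open Finset

namespace GR
set_option linter.unusedSectionVars false

open Finset

/-- Bundle of the standing hypotheses. -/
structure NS {ν : ℕ} [NeZero ν] (S : Set ℕ) (g : Fin ν → ℕ) (f : ℕ) : Prop where
  hadd : ∀ a ∈ S, ∀ b ∈ S, a + b ∈ S
  hgen : Generates S g
  hmono : StrictMono g
  hmpos : 0 < g 0
  hf : f ∉ S
  hfmax : ∀ n, f < n → n ∈ S

variable {ν : ℕ} [NeZero ν] {S : Set ℕ} {g : Fin ν → ℕ} {f : ℕ}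

lemma NS.gpos (H : NS S g f) (i : Fin ν) : 0 < g i :=
  lt_of_lt_of_le H.hmpos (H.hmono.monotone (Fin.zero_le i))

lemma NS.gmem (H : NS S g f) (i : Fin ν) : g i ∈ S := by
  rw [H.hgen]
  refine ⟨Pi.single i 1, ?_⟩
  rw [Finset.sum_eq_single i]
  · simp
  · intro b _ hb; simp [Pi.single_apply, hb]
  · simp

lemma NS.repmem (H : NS S g f) (lam : Fin ν → ℕ) : ∑ i, lam i * g i ∈ S :=
  (H.hgen _).2 ⟨lam, rfl⟩

/-- the set whose sSup is ordS -/
def ordSet (S : Set ℕ) (s : ℕ) : Set ℕ :=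
  {h : ℕ | ∃ F : Fin h → ℕ, (∀ j, F j ∈ S ∧ F j ≠ 0) ∧ ∑ j, F j = s}

lemma ordSet_le {s h : ℕ} (hh : h ∈ ordSet S s) : h ≤ s := by
  obtain ⟨F, hF, hsum⟩ := hh
  calc h = ∑ _j : Fin h, 1 := by simp
  _ ≤ ∑ j, F j := Finset.sum_le_sum (fun j _ => Nat.one_le_iff_ne_zero.2 (hF j).2)
  _ = s := hsum

lemma ordSet_bdd (s : ℕ) : BddAbove (ordSet S s) := ⟨s, fun _ hh => ordSet_le hh⟩

lemma sum_update_erase (k : Fin ν) (F : Fin ν → ℕ) (b : ℕ) :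
    ∑ i, Function.update F k b i = b + ∑ i ∈ univ.erase k, F i := by
  rw [Finset.sum_update_of_mem (mem_univ k), ← Finset.erase_eq]

lemma ordS_eq (S : Set ℕ) (s : ℕ) : ordS S s = sSup (ordSet S s) := rfl

lemma ord_le (s : ℕ) : ordS S s ≤ s := by
  by_cases hne : (ordSet S s).Nonempty
  · exact ordSet_le (Nat.sSup_mem hne (ordSet_bdd s))
  · rw [ordS_eq, Set.not_nonempty_iff_eq_empty.1 hne]
    simp

/-- build a list of parts from a representation -/
lemma exists_parts (H : NS S g f) :
    ∀ (n : ℕ) (lam : Fin ν → ℕ), ∑ i, lam i = n → (n : ℕ) ∈ ordSet S (∑ i, lam i * g i) := by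
  intro n
  induction n with
  | zero =>
    intro lam h
    have hz : ∑ i, lam i * g i = 0 := Finset.sum_eq_zero (fun i hi => by
      rw [Finset.sum_eq_zero_iff.1 h i (mem_univ i), zero_mul])
    rw [hz]
    exact ⟨fun j => j.elim0, fun j => j.elim0, by simp⟩
  | succ n ih =>
    intro lam h
    have hex : ∃ k, lam k ≠ 0 := by
      by_contra hc
      push_neg at hc
      rw [Finset.sum_eq_zero (fun i _ => hc i)] at h
      omega
    obtain ⟨k, hk⟩ := hex
    set lam' : Fin ν → ℕ := Function.update lam k (lam k - 1) with hlam'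
    have hsum1 : lam k + ∑ i ∈ univ.erase k, lam i = ∑ i, lam i :=
      Finset.add_sum_erase _ (fun i => lam i) (mem_univ k)
    have hsum' : ∑ i, lam' i = n := by
      have e : ∑ i, lam' i = (lam k - 1) + ∑ i ∈ univ.erase k, lam i := by
        rw [hlam']
        exact sum_update_erase k lam _
      omega
    obtain ⟨F, hF, hFsum⟩ := ih lam' hsum'
    refine ⟨Fin.cons (g k) F, ?_, ?_⟩
    · intro j
      refine Fin.cases ?_ ?_ j
      · simp only [Fin.cons_zero]
        exact ⟨H.gmem k, by have := H.gpos k; omega⟩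
      · intro j'; simpa using hF j'
    · rw [Fin.sum_cons, hFsum]
      have hfun : (fun i => lam' i * g i)
          = Function.update (fun i => lam i * g i) k ((lam k - 1) * g k) := by
        funext i
        by_cases hik : i = k
        · subst hik; simp [hlam']
        · simp [hlam', Function.update_apply, hik]
      have h1 : ∑ i, lam' i * g i = (lam k - 1) * g k + ∑ i ∈ univ.erase k, lam i * g i := by
        calc ∑ i, lam' i * g i
            = ∑ i, Function.update (fun i => lam i * g i) k ((lam k - 1) * g k) i := by
              rw [← hfun]
          _ = (lam k - 1) * g k + ∑ i ∈ univ.erase k, lam i * g i :=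
              sum_update_erase k _ _
      have h2 : lam k * g k + ∑ i ∈ univ.erase k, lam i * g i = ∑ i, lam i * g i :=
        Finset.add_sum_erase _ (fun i => lam i * g i) (mem_univ k)
      have h3 : g k + (lam k - 1) * g k = lam k * g k := by
        cases' Nat.exists_eq_succ_of_ne_zero hk with t ht
        rw [ht, Nat.succ_sub_one, Nat.succ_mul]
        omega
      omega

lemma csum_le_ord (H : NS S g f) {w : ℕ} (lam : Fin ν → ℕ) (hrep : ∑ i, lam i * g i = w) :
    ∑ i, lam i ≤ ordS S w := by
  subst hrep
  exact le_csSup (ordSet_bdd _) (exists_parts H _ lam rfl)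

lemma exists_rep_ge (H : NS S g f) {w h : ℕ} (hh : h ∈ ordSet S w) :
    ∃ lam : Fin ν → ℕ, ∑ i, lam i * g i = w ∧ h ≤ ∑ i, lam i := by
  obtain ⟨F, hF, hsum⟩ := hh
  have hrep : ∀ j : Fin h, ∃ lam : Fin ν → ℕ, ∑ i, lam i * g i = F j :=
    fun j => (H.hgen (F j)).1 (hF j).1
  choose lamf hlamf using hrep
  refine ⟨fun i => ∑ j, lamf j i, ?_, ?_⟩
  · calc ∑ i, (∑ j, lamf j i) * g i = ∑ i, ∑ j, lamf j i * g i := by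
          exact Finset.sum_congr rfl (fun i _ => Finset.sum_mul _ _ _)
    _ = ∑ j, ∑ i, lamf j i * g i := Finset.sum_comm
    _ = ∑ j, F j := Finset.sum_congr rfl (fun j _ => hlamf j)
    _ = w := hsum
  · calc h = ∑ _j : Fin h, 1 := by simp
    _ ≤ ∑ j, ∑ i, lamf j i := by
        refine Finset.sum_le_sum (fun j _ => ?_)
        by_contra hc
        push_neg at hc
        have hz : ∑ i, lamf j i = 0 := by omega
        have : F j = 0 := by
          rw [← hlamf j]
          exact Finset.sum_eq_zero (fun i hi => by
            rw [Finset.sum_eq_zero_iff.1 hz i (mem_univ i), zero_mul])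
        exact (hF j).2 this
    _ = ∑ i, ∑ j, lamf j i := Finset.sum_comm

lemma ord_spec (H : NS S g f) {w : ℕ} (hw : w ∈ S) :
    ∃ lam : Fin ν → ℕ, ∑ i, lam i * g i = w ∧ ∑ i, lam i = ordS S w := by
  obtain ⟨lam0, hlam0⟩ := (H.hgen w).1 hw
  have hne : (ordSet S w).Nonempty := ⟨∑ i, lam0 i, by
    have := exists_parts H (∑ i, lam0 i) lam0 rfl
    rwa [hlam0] at this⟩
  have hmem : ordS S w ∈ ordSet S w := Nat.sSup_mem hne (ordSet_bdd w)
  obtain ⟨lam, hrep, hge⟩ := exists_rep_ge H hmem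
  exact ⟨lam, hrep, le_antisymm (csum_le_ord H lam hrep) hge⟩

end GR
namespace GR
set_option linter.unusedSectionVars false
open Finset
variable {ν : ℕ} [NeZero ν] {S : Set ℕ} {g : Fin ν → ℕ} {f : ℕ}

lemma W_mem_apery (H : NS S g f) : InApery S (g 0) (f + g 0) := by
  constructor
  · exact H.hfmax _ (by have := H.hmpos; omega)
  · intro u hu hue
    have : u = f := by omega
    exact H.hf (this ▸ hu)

lemma apery_le (H : NS S g f) {w : ℕ} (hw : InApery S (g 0) w) : w ≤ f + g 0 := by
  by_contra hc
  push_neg at hc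
  have h1 : w - g 0 ∈ S := H.hfmax _ (by have := H.hmpos; omega)
  exact hw.2 _ h1 (by have := H.hmpos; omega)

lemma apery_summand (H : NS S g f) {u v : ℕ} (hu : u ∈ S) (hv : v ∈ S)
    (hw : InApery S (g 0) (u + v)) : InApery S (g 0) u :=
  ⟨hu, fun x hx hxe => hw.2 (x + v) (H.hadd x hx v hv) (by omega)⟩

lemma rep_zero_of_apery (H : NS S g f) {w : ℕ} (hw : InApery S (g 0) w)
    (lam : Fin ν → ℕ) (hrep : ∑ i, lam i * g i = w) : lam 0 = 0 := by
  by_contra hc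
  have h1 : ∑ i, Function.update lam 0 (lam 0 - 1) i * g i + g 0 = w := by
    have e1 : (fun i => Function.update lam 0 (lam 0 - 1) i * g i)
        = Function.update (fun i => lam i * g i) 0 ((lam 0 - 1) * g 0) := by
      funext i
      by_cases hik : i = (0 : Fin ν)
      · subst hik; simp
      · simp [Function.update_apply, hik]
    rw [show ∑ i, Function.update lam 0 (lam 0 - 1) i * g i
        = ∑ i, Function.update (fun i => lam i * g i) 0 ((lam 0 - 1) * g 0) i from by rw [← e1],
      sum_update_erase]
    have h2 : lam 0 * g 0 + ∑ i ∈ univ.erase 0, lam i * g i = ∑ i, lam i * g i :=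
      Finset.add_sum_erase _ (fun i => lam i * g i) (mem_univ 0)
    have h3 : (lam 0 - 1) * g 0 + g 0 = lam 0 * g 0 := by
      cases' Nat.exists_eq_succ_of_ne_zero hc with t ht
      rw [ht, Nat.succ_sub_one, Nat.succ_mul]
    omega
  exact hw.2 _ (H.repmem _) h1

lemma maxrep_sub (H : NS S g f) {w : ℕ} {lam mu : Fin ν → ℕ} (hw : InApery S (g 0) w)
    (hmax : IsMaxRep S g lam w) (hmu : ∀ i, mu i ≤ lam i) :
    InApery S (g 0) (∑ i, mu i * g i) ∧ IsMaxRep S g mu (∑ i, mu i * g i) := by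
  obtain ⟨hrep, hord⟩ := hmax
  have hsplitg : ∀ G : Fin ν → ℕ,
      ∑ i, mu i * G i + ∑ i, (lam i - mu i) * G i = ∑ i, lam i * G i := by
    intro G
    rw [← Finset.sum_add_distrib]
    refine Finset.sum_congr rfl (fun i _ => ?_)
    rw [← Nat.add_mul]
    congr 1
    have := hmu i
    omega
  have hvw : ∑ i, mu i * g i + ∑ i, (lam i - mu i) * g i = w := by rw [hsplitg, hrep]
  have hv : InApery S (g 0) (∑ i, mu i * g i) :=
    apery_summand H (H.repmem mu) (H.repmem _) (by rw [hvw]; exact hw)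
  have hcs : ∑ i, mu i + ∑ i, (lam i - mu i) = ∑ i, lam i := by
    rw [← Finset.sum_add_distrib]
    exact Finset.sum_congr rfl (fun i _ => by have := hmu i; omega)
  refine ⟨hv, rfl, ?_⟩
  have hge : ∑ i, mu i ≤ ordS S (∑ i, mu i * g i) := csum_le_ord H mu rfl
  have hle : ordS S (∑ i, mu i * g i) ≤ ∑ i, mu i := by
    by_contra hcon
    push_neg at hcon
    obtain ⟨rho, hrhorep, hrhosum⟩ := ord_spec H (H.repmem mu)
    have hrep2 : ∑ i, (rho i + (lam i - mu i)) * g i = w := by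
      simp only [Nat.add_mul]
      rw [Finset.sum_add_distrib, hrhorep]
      omega
    have hb : ∑ i, (rho i + (lam i - mu i)) ≤ ordS S w := csum_le_ord H _ hrep2
    have hsum2 : ∑ i, (rho i + (lam i - mu i)) = ∑ i, rho i + ∑ i, (lam i - mu i) :=
      Finset.sum_add_distrib
    omega
  omega

end GR
namespace GR
set_option linter.unusedSectionVars false
open Finset
variable {ν : ℕ} [NeZero ν] {S : Set ℕ} {g : Fin ν → ℕ} {f : ℕ}

def gset (S : Set ℕ) {ν : ℕ} [NeZero ν] (g : Fin ν → ℕ) (k : Fin ν) : Set ℕ :=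
  {h : ℕ | InApery S (g 0) (h * g k) ∧ ordS S (h * g k) = h ∧ UniqueMaxRep S g (h * g k)}

lemma gammaN_eq (k : Fin ν) : gammaN S (g 0) g k = sSup (gset S g k) := rfl

lemma ord_zero : ordS S 0 = 0 := Nat.le_zero.1 (ord_le 0)

lemma zero_mem_S (H : NS S g f) : 0 ∈ S := by
  have := H.repmem (fun _ => 0)
  simpa using this

lemma zero_apery (H : NS S g f) : InApery S (g 0) 0 :=
  ⟨zero_mem_S H, fun u _ he => by have := H.hmpos; omega⟩

lemma unique_zero (H : NS S g f) : UniqueMaxRep S g 0 := by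
  refine ⟨fun _ => 0, ⟨by simp, by simp [ord_zero]⟩, ?_⟩
  intro lam hlam
  funext i
  have h1 : lam i * g i = 0 := Finset.sum_eq_zero_iff.1 hlam.1 i (mem_univ i)
  have h2 := H.gpos i
  rcases Nat.mul_eq_zero.1 h1 with h | h
  · exact h
  · omega

lemma zero_mem_gset (H : NS S g f) (k : Fin ν) : 0 ∈ gset S g k := by
  refine ⟨?_, ?_, ?_⟩ <;> rw [zero_mul]
  · exact zero_apery H
  · exact ord_zero
  · exact unique_zero H

lemma gset_bdd (H : NS S g f) (k : Fin ν) : BddAbove (gset S g k) := by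
  refine ⟨f + g 0, fun h hh => ?_⟩
  calc h ≤ h * g k := Nat.le_mul_of_pos_right h (H.gpos k)
  _ ≤ f + g 0 := apery_le H hh.1

lemma gamma_mem (H : NS S g f) (k : Fin ν) : gammaN S (g 0) g k ∈ gset S g k := by
  rw [gammaN_eq]
  exact Nat.sSup_mem ⟨0, zero_mem_gset H k⟩ (gset_bdd H k)

lemma gamma_succ_notmem (H : NS S g f) (k : Fin ν) :
    gammaN S (g 0) g k + 1 ∉ gset S g k := by
  intro hmem
  have := le_csSup (gset_bdd H k) hmem
  rw [← gammaN_eq] at this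
  omega

lemma single_mul_sum (k : Fin ν) (b : ℕ) (G : Fin ν → ℕ) :
    ∑ i, (Pi.single k b : Fin ν → ℕ) i * G i = b * G k := by
  rw [Finset.sum_eq_single k]
  · rw [Pi.single_eq_same]
  · intro i _ hik
    rw [Pi.single_eq_of_ne hik, zero_mul]
  · intro h
    exact absurd (mem_univ k) h

lemma single_csum (k : Fin ν) (b : ℕ) : ∑ i, (Pi.single k b : Fin ν → ℕ) i = b := by
  rw [Finset.sum_eq_single k]
  · rw [Pi.single_eq_same]
  · intro i _ hik
    exact Pi.single_eq_of_ne (M := fun _ => ℕ) hik b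
  · intro h
    exact absurd (mem_univ k) h

lemma escape (H : NS S g f) {w : ℕ} {τ : Fin ν → ℕ} (hw : InApery S (g 0) w)
    (hτ : IsMaxRep S g τ w) {k : Fin ν} (hk : gammaN S (g 0) g k < τ k) :
    ∃ σ : Fin ν → ℕ, (∑ i, σ i * g i = (gammaN S (g 0) g k + 1) * g k) ∧
      (∑ i, σ i = gammaN S (g 0) g k + 1) ∧
      σ ≠ (Pi.single k (gammaN S (g 0) g k + 1) : Fin ν → ℕ) := by
  set γ1 := gammaN S (g 0) g k + 1 with hγ1
  have hμτ : ∀ i, (Pi.single k γ1 : Fin ν → ℕ) i ≤ τ i := by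
    intro i
    by_cases hik : i = k
    · subst hik
      rw [Pi.single_eq_same]
      omega
    · rw [Pi.single_eq_of_ne hik]
      exact Nat.zero_le _
  obtain ⟨hap, hmr⟩ := maxrep_sub H hw hτ hμτ
  rw [single_mul_sum] at hap hmr
  have hordv : ordS S (γ1 * g k) = γ1 := by
    have h2 := hmr.2
    rw [single_csum] at h2
    omega
  have hnotu : ¬ UniqueMaxRep S g (γ1 * g k) := by
    intro hu
    exact gamma_succ_notmem H k ⟨hap, hordv, hu⟩
  have hexists : ∃ σ : Fin ν → ℕ, IsMaxRep S g σ (γ1 * g k) ∧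
      σ ≠ (Pi.single k γ1 : Fin ν → ℕ) := by
    by_contra hcon
    push_neg at hcon
    exact hnotu ⟨(Pi.single k γ1 : Fin ν → ℕ), hmr, fun y hy => hcon y hy⟩
  obtain ⟨σ, hσ, hσne⟩ := hexists
  refine ⟨σ, hσ.1, ?_, hσne⟩
  have h2 := hσ.2
  omega

lemma jensen (H : NS S g f) {k : Fin ν} {h : ℕ} {σ : Fin ν → ℕ}
    (hrep : ∑ i, σ i * g i = h * g k) (hsum : ∑ i, σ i = h)
    (hne : σ ≠ (Pi.single k h : Fin ν → ℕ)) : h * g k ^ 2 < ∑ i, σ i * g i ^ 2 := by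
  have hex : ∃ j, j ≠ k ∧ σ j ≠ 0 := by
    by_contra hc
    push_neg at hc
    apply hne
    funext i
    by_cases hik : i = k
    · subst hik
      have e1 : ∑ i', σ i' * g i' = σ i * g i := by
        rw [Finset.sum_eq_single i]
        · intro b _ hbk
          rw [hc b hbk, zero_mul]
        · intro hh
          exact absurd (mem_univ i) hh
      have e2 : σ i * g i = h * g i := by omega
      have e3 : σ i = h := Nat.eq_of_mul_eq_mul_right (H.gpos i) e2
      rw [e3, Pi.single_eq_same]
    · rw [hc i hik, Pi.single_eq_of_ne hik]
  obtain ⟨j, hjk, hj⟩ := hex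
  have key : (∑ i, (σ i : ℤ) * ((g i : ℤ) - (g k : ℤ))^2)
      = (∑ i, (σ i : ℤ) * (g i : ℤ)^2) - (h : ℤ) * (g k : ℤ)^2 := by
    have e1 : ∀ i ∈ univ, (σ i : ℤ) * ((g i : ℤ) - (g k : ℤ))^2
        = ((σ i : ℤ) * (g i:ℤ)^2 + (g k:ℤ)^2 * (σ i:ℤ)) - 2*(g k:ℤ)*((σ i:ℤ)*(g i:ℤ)) := by
      intro i _
      ring
    rw [Finset.sum_congr rfl e1, Finset.sum_sub_distrib, Finset.sum_add_distrib,
      ← Finset.mul_sum, ← Finset.mul_sum]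
    have c1 : (∑ i, (σ i:ℤ) * (g i:ℤ)) = (h:ℤ) * (g k:ℤ) := by exact_mod_cast hrep
    have c2 : (∑ i, (σ i:ℤ)) = (h:ℤ) := by exact_mod_cast hsum
    rw [c1, c2]
    ring
  have pos : 0 < ∑ i, (σ i:ℤ) * ((g i:ℤ) - (g k:ℤ))^2 := by
    have h1 : (0:ℤ) < σ j := by exact_mod_cast Nat.pos_of_ne_zero hj
    have h2 : (g j:ℤ) - (g k:ℤ) ≠ 0 := by
      have h3 : g j ≠ g k := H.hmono.injective.ne hjk
      intro hz
      apply h3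
      omega
    have hterm : 0 < (σ j:ℤ) * ((g j:ℤ) - (g k:ℤ))^2 := by positivity
    calc (0:ℤ) < (σ j:ℤ) * ((g j:ℤ) - (g k:ℤ))^2 := hterm
    _ ≤ ∑ i, (σ i:ℤ) * ((g i:ℤ) - (g k:ℤ))^2 :=
        Finset.single_le_sum (f := fun i => (σ i:ℤ) * ((g i:ℤ) - (g k:ℤ))^2) (fun i _ => by positivity) (mem_univ j)
  have hfin : (h:ℤ) * (g k:ℤ)^2 < ∑ i, (σ i:ℤ)*(g i:ℤ)^2 := by linarith
  exact_mod_cast hfin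

end GR
namespace GR
set_option linter.unusedSectionVars false
open Finset
variable {ν : ℕ} [NeZero ν] {S : Set ℕ} {g : Fin ν → ℕ} {f : ℕ}

/-- the convexity potential -/
def Phi (g lam : Fin ν → ℕ) : ℕ := ∑ i, lam i * g i ^ 2

lemma recomb {a s c G : ℕ} (h : s ≤ a) : (a - s + c) * G + s * G = a * G + c * G := by
  rw [← Nat.add_mul, ← Nat.add_mul]
  congr 1
  omega

lemma sum_recomb {τ μ σ : Fin ν → ℕ} (hle : ∀ i, μ i ≤ τ i) (G : Fin ν → ℕ) :
    ∑ i, (τ i - μ i + σ i) * G i + ∑ i, μ i * G i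
      = ∑ i, τ i * G i + ∑ i, σ i * G i := by
  rw [← Finset.sum_add_distrib, ← Finset.sum_add_distrib]
  exact Finset.sum_congr rfl (fun i _ => recomb (hle i))

lemma csum_recomb {τ μ σ : Fin ν → ℕ} (hle : ∀ i, μ i ≤ τ i) :
    ∑ i, (τ i - μ i + σ i) + ∑ i, μ i = ∑ i, τ i + ∑ i, σ i := by
  rw [← Finset.sum_add_distrib, ← Finset.sum_add_distrib]
  exact Finset.sum_congr rfl (fun i _ => by have := hle i; omega)

lemma bump (H : NS S g f) {w : ℕ} {τ : Fin ν → ℕ} (hw : InApery S (g 0) w)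
    (hτ : IsMaxRep S g τ w) {k : Fin ν} (hk : gammaN S (g 0) g k < τ k) :
    ∃ τ' : Fin ν → ℕ, IsMaxRep S g τ' w ∧ Phi g τ < Phi g τ' := by
  obtain ⟨σ, hσrep, hσsum, hσne⟩ := escape H hw hτ hk
  set γ1 := gammaN S (g 0) g k + 1 with hγ1
  set μ : Fin ν → ℕ := Pi.single k γ1 with hμ
  have hμle : ∀ i, μ i ≤ τ i := by
    intro i
    by_cases hik : i = k
    · subst hik
      rw [hμ, Pi.single_eq_same]
      omega
    · rw [hμ, Pi.single_eq_of_ne hik]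
      exact Nat.zero_le _
  have hμg : ∑ i, μ i * g i = γ1 * g k := single_mul_sum k γ1 g
  have hμg2 : ∑ i, μ i * g i ^ 2 = γ1 * g k ^ 2 := single_mul_sum k γ1 (fun i => g i ^ 2)
  have hμc : ∑ i, μ i = γ1 := single_csum k γ1
  refine ⟨fun i => τ i - μ i + σ i, ⟨?_, ?_⟩, ?_⟩
  · show ∑ i, (τ i - μ i + σ i) * g i = w
    have h1 := sum_recomb hμle g (τ := τ) (μ := μ) (σ := σ)
    have h2 := hτ.1
    omega
  · show ∑ i, (τ i - μ i + σ i) = ordS S w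
    have h1 := csum_recomb hμle (τ := τ) (μ := μ) (σ := σ)
    have h2 := hτ.2
    omega
  · have h1 := sum_recomb hμle (fun i => g i ^ 2) (τ := τ) (μ := μ) (σ := σ)
    have h2 : γ1 * g k ^ 2 < ∑ i, σ i * g i ^ 2 := jensen H hσrep hσsum hσne
    have h3 : Phi g τ = ∑ i, τ i * g i ^ 2 := rfl
    have h4 : Phi g (fun i => τ i - μ i + σ i) = ∑ i, (τ i - μ i + σ i) * g i ^ 2 := rfl
    omega

lemma xmax (H : NS S g f) {w : ℕ} (hw : InApery S (g 0) w) :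
    ∃ τ : Fin ν → ℕ, IsMaxRep S g τ w ∧ τ 0 = 0 ∧ (∀ i, τ i ≤ gammaN S (g 0) g i) ∧
      ∀ ρ : Fin ν → ℕ, IsMaxRep S g ρ w → Phi g ρ ≤ Phi g τ := by
  classical
  set R : Finset (Fin ν → ℕ) :=
    (Finset.Icc 0 (fun _ => w)).filter (fun lam => IsMaxRep S g lam w) with hR
  have hmem : ∀ lam : Fin ν → ℕ, lam ∈ R ↔ IsMaxRep S g lam w := by
    intro lam
    rw [hR, Finset.mem_filter, Finset.mem_Icc]
    constructor
    · tauto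
    · intro hmr
      refine ⟨⟨fun i => Nat.zero_le _, fun i => ?_⟩, hmr⟩
      calc lam i ≤ lam i * g i := Nat.le_mul_of_pos_right _ (H.gpos i)
      _ ≤ ∑ j, lam j * g j :=
          Finset.single_le_sum (f := fun j => lam j * g j) (fun _ _ => Nat.zero_le _) (mem_univ i)
      _ = w := hmr.1
  have hne : R.Nonempty := by
    obtain ⟨lam, hrep, hsum⟩ := ord_spec H hw.1
    exact ⟨lam, (hmem lam).2 ⟨hrep, hsum⟩⟩
  obtain ⟨τ, hτR, hτmax⟩ := Finset.exists_max_image R (Phi g) hne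
  have hτ : IsMaxRep S g τ w := (hmem τ).1 hτR
  refine ⟨τ, hτ, rep_zero_of_apery H hw τ hτ.1, ?_, fun ρ hρ => hτmax ρ ((hmem ρ).2 hρ)⟩
  intro k
  by_contra hcon
  push_neg at hcon
  obtain ⟨τ', hτ', hph⟩ := bump H hw hτ hcon
  exact absurd (hτmax τ' ((hmem τ').2 hτ')) (by omega)

end GR
namespace GR
set_option linter.unusedSectionVars false
open Finset
variable {ν : ℕ} [NeZero ν] {S : Set ℕ} {g : Fin ν → ℕ} {f : ℕ}

lemma sum_split {mu lam : Fin ν → ℕ} (hmu : ∀ i, mu i ≤ lam i) (G : Fin ν → ℕ) :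
    ∑ i, mu i * G i + ∑ i, (lam i - mu i) * G i = ∑ i, lam i * G i := by
  rw [← Finset.sum_add_distrib]
  refine Finset.sum_congr rfl (fun i _ => ?_)
  rw [← Nat.add_mul]
  congr 1
  have := hmu i
  omega

lemma gamma_zero (H : NS S g f) : gammaN S (g 0) g 0 = 0 := by
  rw [gammaN_eq]
  refine Nat.le_zero.1 (csSup_le ⟨0, zero_mem_gset H 0⟩ ?_)
  intro h hh
  by_contra hc
  push_neg at hc
  have h1 : (h - 1) * g 0 ∈ S := by
    rw [← single_mul_sum 0 (h - 1) g]
    exact H.repmem _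
  apply hh.1.2 _ h1
  cases' Nat.exists_eq_succ_of_ne_zero (by omega : h ≠ 0) with t ht
  rw [ht, Nat.succ_sub_one, Nat.succ_mul]

lemma gamma_sum_erase (H : NS S g f) (G : Fin ν → ℕ) :
    ∑ i ∈ univ.erase 0, gammaN S (g 0) g i * G i = ∑ i, gammaN S (g 0) g i * G i :=
  Finset.sum_erase _ (by rw [gamma_zero H, zero_mul])

lemma le_gv_of_maxrep_W (H : NS S g f)
    (hb : f + g 0 = ∑ i, gammaN S (g 0) g i * g i) {ρ : Fin ν → ℕ}
    (hρ : ∑ i, ρ i * g i = f + g 0) (hle : ∀ i, ρ i ≤ gammaN S (g 0) g i) :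
    ρ = fun i => gammaN S (g 0) g i := by
  have h1 := sum_split hle g
  have h2 : ∑ i, (gammaN S (g 0) g i - ρ i) * g i = 0 := by omega
  funext i
  have h3 : (gammaN S (g 0) g i - ρ i) * g i = 0 := Finset.sum_eq_zero_iff.1 h2 i (mem_univ i)
  have h4 := H.gpos i
  have h5 := hle i
  rcases Nat.mul_eq_zero.1 h3 with h | h
  · omega
  · omega

lemma gv_maxrep (H : NS S g f) (hb : f + g 0 = ∑ i, gammaN S (g 0) g i * g i) :
    IsMaxRep S g (fun i => gammaN S (g 0) g i) (f + g 0) := by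
  obtain ⟨τ, hτ, h0, hle, hmax⟩ := xmax H (W_mem_apery H)
  have heq := le_gv_of_maxrep_W H hb hτ.1 hle
  rw [← heq]
  exact hτ

lemma box_mem (H : NS S g f) (hb : f + g 0 = ∑ i, gammaN S (g 0) g i * g i)
    {lam : Fin ν → ℕ} (hlam : ∀ i, lam i ≤ gammaN S (g 0) g i) :
    InApery S (g 0) (∑ i, lam i * g i) ∧ IsMaxRep S g lam (∑ i, lam i * g i) :=
  maxrep_sub H (W_mem_apery H) (gv_maxrep H hb) hlam

lemma phi_lt (H : NS S g f) (hb : f + g 0 = ∑ i, gammaN S (g 0) g i * g i)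
    {ρ : Fin ν → ℕ} (hρ : IsMaxRep S g ρ (f + g 0))
    (hne : ρ ≠ fun i => gammaN S (g 0) g i) :
    Phi g ρ < Phi g (fun i => gammaN S (g 0) g i) := by
  obtain ⟨τ, hτ, h0, hle, hmax⟩ := xmax H (W_mem_apery H)
  have heq := le_gv_of_maxrep_W H hb hτ.1 hle
  have hub : Phi g ρ ≤ Phi g (fun i => gammaN S (g 0) g i) := by
    rw [← heq]
    exact hmax ρ hρ
  rcases lt_or_eq_of_le hub with h | h
  · exact h
  · exfalso
    -- ρ is also Phi-maximal, so ρ ≤ gv, so ρ = gv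
    have hρle : ∀ k, ρ k ≤ gammaN S (g 0) g k := by
      intro k
      by_contra hcon
      push_neg at hcon
      obtain ⟨τ', hτ', hph⟩ := bump H (W_mem_apery H) hρ hcon
      have := hmax τ' hτ'
      rw [heq] at this
      omega
    exact hne (le_gv_of_maxrep_W H hb hρ.1 hρle)

lemma box_inj (H : NS S g f) (hb : f + g 0 = ∑ i, gammaN S (g 0) g i * g i)
    {lam lam' : Fin ν → ℕ} (h1 : ∀ i, lam i ≤ gammaN S (g 0) g i)
    (h2 : ∀ i, lam' i ≤ gammaN S (g 0) g i)
    (heq : ∑ i, lam i * g i = ∑ i, lam' i * g i) : lam = lam' := by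
  have hmr1 := (box_mem H hb h1).2
  have hmr2 := (box_mem H hb h2).2
  have hcs : ∑ i, lam i = ∑ i, lam' i := by
    have e1 := hmr1.2
    have e2 := hmr2.2
    rw [← heq] at e2
    omega
  by_contra hne
  have hgvmr := gv_maxrep H hb
  -- the two exchanged representations
  have hρ : IsMaxRep S g (fun i => gammaN S (g 0) g i - lam i + lam' i) (f + g 0) := by
    constructor
    · show ∑ i, (gammaN S (g 0) g i - lam i + lam' i) * g i = f + g 0
      have e1 : ∑ i, (gammaN S (g 0) g i - lam i + lam' i) * g i + ∑ i, lam i * g i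
          = ∑ i, gammaN S (g 0) g i * g i + ∑ i, lam' i * g i := sum_recomb h1 g
      omega
    · show ∑ i, (gammaN S (g 0) g i - lam i + lam' i) = ordS S (f + g 0)
      have e1 : ∑ i, (gammaN S (g 0) g i - lam i + lam' i) + ∑ i, lam i
          = ∑ i, gammaN S (g 0) g i + ∑ i, lam' i := csum_recomb h1
      have e2 : ∑ i, gammaN S (g 0) g i = ordS S (f + g 0) := hgvmr.2
      omega
  have hρ' : IsMaxRep S g (fun i => gammaN S (g 0) g i - lam' i + lam i) (f + g 0) := by
    constructor
    · show ∑ i, (gammaN S (g 0) g i - lam' i + lam i) * g i = f + g 0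
      have e1 : ∑ i, (gammaN S (g 0) g i - lam' i + lam i) * g i + ∑ i, lam' i * g i
          = ∑ i, gammaN S (g 0) g i * g i + ∑ i, lam i * g i := sum_recomb h2 g
      omega
    · show ∑ i, (gammaN S (g 0) g i - lam' i + lam i) = ordS S (f + g 0)
      have e1 : ∑ i, (gammaN S (g 0) g i - lam' i + lam i) + ∑ i, lam' i
          = ∑ i, gammaN S (g 0) g i + ∑ i, lam i := csum_recomb h2
      have e2 : ∑ i, gammaN S (g 0) g i = ordS S (f + g 0) := hgvmr.2
      omega
  have hρne : (fun i => gammaN S (g 0) g i - lam i + lam' i) ≠ fun i => gammaN S (g 0) g i := by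
    intro h
    apply hne
    funext i
    have e := congrFun h i
    try simp only at e
    have := h1 i
    have := h2 i
    omega
  have hρ'ne : (fun i => gammaN S (g 0) g i - lam' i + lam i) ≠ fun i => gammaN S (g 0) g i := by
    intro h
    apply hne
    funext i
    have e := congrFun h i
    try simp only at e
    have := h1 i
    have := h2 i
    omega
  have c1 := phi_lt H hb hρ hρne
  have c2 := phi_lt H hb hρ' hρ'ne
  -- Phi identities
  have p1 : ∑ i, (gammaN S (g 0) g i - lam i + lam' i) * g i ^ 2 + ∑ i, lam i * g i ^ 2
      = ∑ i, gammaN S (g 0) g i * g i ^ 2 + ∑ i, lam' i * g i ^ 2 :=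
    sum_recomb h1 (fun i => g i ^ 2)
  have p2 : ∑ i, (gammaN S (g 0) g i - lam' i + lam i) * g i ^ 2 + ∑ i, lam' i * g i ^ 2
      = ∑ i, gammaN S (g 0) g i * g i ^ 2 + ∑ i, lam i * g i ^ 2 :=
    sum_recomb h2 (fun i => g i ^ 2)
  have q1 : Phi g (fun i => gammaN S (g 0) g i - lam i + lam' i)
      = ∑ i, (gammaN S (g 0) g i - lam i + lam' i) * g i ^ 2 := rfl
  have q2 : Phi g (fun i => gammaN S (g 0) g i - lam' i + lam i)
      = ∑ i, (gammaN S (g 0) g i - lam' i + lam i) * g i ^ 2 := rfl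
  have q3 : Phi g (fun i => gammaN S (g 0) g i) = ∑ i, gammaN S (g 0) g i * g i ^ 2 := rfl
  omega

end GR
namespace GR
set_option linter.unusedSectionVars false
open Finset
variable {ν : ℕ} [NeZero ν] {S : Set ℕ} {g : Fin ν → ℕ} {f : ℕ}

open Classical in
noncomputable def ApF (S : Set ℕ) (g0 f : ℕ) : Finset ℕ :=
  (Finset.range (f + g0 + 1)).filter (fun w => InApery S g0 w)

lemma mem_ApF (H : NS S g f) {w : ℕ} : w ∈ ApF S (g 0) f ↔ InApery S (g 0) w := by
  classical
  simp only [ApF, Finset.mem_filter, Finset.mem_range]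
  constructor
  · tauto
  · intro hw
    exact ⟨by have := apery_le H hw; omega, hw⟩

lemma add_mul_g0_mem (H : NS S g f) {x : ℕ} (hx : x ∈ S) (k : ℕ) : x + k * g 0 ∈ S := by
  induction k with
  | zero => simpa using hx
  | succ n ih =>
    have h1 := H.hadd _ ih _ (H.gmem 0)
    have h2 : x + n * g 0 + g 0 = x + (n + 1) * g 0 := by
      rw [Nat.succ_mul]
      omega
    rwa [h2] at h1

lemma apery_unique_mod_aux (H : NS S g f) {a b : ℕ} (ha : InApery S (g 0) a)
    (hb : InApery S (g 0) b) (hmod : a % g 0 = b % g 0) (hle : a ≤ b) : a = b := by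
  have hdvd : g 0 ∣ b - a := (Nat.modEq_iff_dvd' hle).1 hmod
  obtain ⟨t, ht⟩ := hdvd
  match t, ht with
  | 0, ht => omega
  | (n+1), ht =>
    exfalso
    have h1 : b = a + n * g 0 + g 0 := by
      rw [Nat.mul_succ] at ht
      have : g 0 * n = n * g 0 := Nat.mul_comm _ _
      omega
    exact hb.2 _ (add_mul_g0_mem H ha.1 n) h1.symm

lemma apery_unique_mod (H : NS S g f) {a b : ℕ} (ha : InApery S (g 0) a)
    (hb : InApery S (g 0) b) (hmod : a % g 0 = b % g 0) : a = b := by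
  rcases le_total a b with h | h
  · exact apery_unique_mod_aux H ha hb hmod h
  · exact (apery_unique_mod_aux H hb ha hmod.symm h).symm

lemma ApF_card (H : NS S g f) : (ApF S (g 0) f).card = g 0 := by
  classical
  have hbij := Finset.card_bij (s := ApF S (g 0) f) (t := Finset.range (g 0))
    (fun w _ => w % g 0)
    (fun a _ => Finset.mem_range.2 (Nat.mod_lt _ H.hmpos))
    (fun a₁ ha₁ a₂ ha₂ h =>
      apery_unique_mod H ((mem_ApF H).1 ha₁) ((mem_ApF H).1 ha₂) h)
    ?_
  · rw [hbij, Finset.card_range]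
  · intro r hr
    have hr' : r < g 0 := Finset.mem_range.1 hr
    set p : ℕ → Prop := fun n => n ∈ S ∧ n % g 0 = r with hp
    haveI : DecidablePred p := Classical.decPred p
    have hex : ∃ n, p n := by
      refine ⟨r + (f + 1) * g 0, H.hfmax _ ?_, ?_⟩
      · have : f + 1 ≤ (f + 1) * g 0 := Nat.le_mul_of_pos_right _ H.hmpos
        omega
      · rw [Nat.add_mul_mod_self_right]
        exact Nat.mod_eq_of_lt hr'
    set w := Nat.find hex with hwdef
    have hw : p w := Nat.find_spec hex
    have hwap : InApery S (g 0) w := by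
      refine ⟨hw.1, fun u hu hue => ?_⟩
      have humod : u % g 0 = r := by
        have : (u + g 0) % g 0 = u % g 0 := Nat.add_mod_right _ _
        rw [hue] at this
        rw [← this]
        exact hw.2
      have hult : u < w := by have := H.hmpos; omega
      exact Nat.find_min hex hult ⟨hu, humod⟩
    exact ⟨w, (mem_ApF H).2 hwap, hw.2⟩

noncomputable def boxF (S : Set ℕ) {ν : ℕ} [NeZero ν] (g : Fin ν → ℕ) : Finset (Fin ν → ℕ) :=
  Finset.Icc 0 (fun i => gammaN S (g 0) g i)

lemma mem_boxF {lam : Fin ν → ℕ} :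
    lam ∈ boxF S g ↔ ∀ i, lam i ≤ gammaN S (g 0) g i := by
  rw [boxF, Finset.mem_Icc]
  constructor
  · intro h i
    exact h.2 i
  · intro h
    exact ⟨fun i => Nat.zero_le _, fun i => h i⟩

lemma boxF_card (H : NS S g f) :
    (boxF S g).card = ∏ i ∈ univ.erase 0, (gammaN S (g 0) g i + 1) := by
  rw [boxF, Pi.card_Icc]
  have h1 : ∀ i : Fin ν, (Finset.Icc ((0 : Fin ν → ℕ) i) (gammaN S (g 0) g i)).card
      = gammaN S (g 0) g i + 1 := by
    intro i
    rw [Nat.card_Icc]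
    simp
  rw [Finset.prod_congr rfl (fun i _ => h1 i),
    ← Finset.mul_prod_erase univ _ (mem_univ 0), gamma_zero H]
  simp

lemma main_b_of_a (H : NS S g f) (ha : AperySet S (g 0) = GammaSet S (g 0) g) :
    f + g 0 = ∑ i ∈ univ.erase 0, gammaN S (g 0) g i * g i := by
  have h1 : f + g 0 ∈ GammaSet S (g 0) g := by
    rw [← ha]
    exact W_mem_apery H
  obtain ⟨lam, hl0, hle, hsum⟩ := h1
  have h2 : (∑ i, gammaN S (g 0) g i * g i) ∈ AperySet S (g 0) := by
    rw [ha]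
    exact ⟨fun i => gammaN S (g 0) g i, gamma_zero H, fun i => le_rfl, rfl⟩
  have h3 : ∑ i, gammaN S (g 0) g i * g i ≤ f + g 0 := apery_le H h2
  have h4 : ∑ i, lam i * g i ≤ ∑ i, gammaN S (g 0) g i * g i :=
    Finset.sum_le_sum (fun i _ => Nat.mul_le_mul_right (g i) (hle i))
  rw [gamma_sum_erase H g]
  omega

lemma main_a_of_b (H : NS S g f)
    (hb : f + g 0 = ∑ i ∈ univ.erase 0, gammaN S (g 0) g i * g i) :
    AperySet S (g 0) = GammaSet S (g 0) g := by
  have hbW : f + g 0 = ∑ i, gammaN S (g 0) g i * g i := by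
    rw [hb, gamma_sum_erase H g]
  ext w
  constructor
  · intro hw
    obtain ⟨τ, hτ, h0, hle, _⟩ := xmax H hw
    exact ⟨τ, h0, hle, hτ.1⟩
  · intro hw
    obtain ⟨lam, hl0, hle, hsum⟩ := hw
    have := (box_mem H hbW hle).1
    rwa [hsum] at this

lemma main_c_of_b (H : NS S g f)
    (hb : f + g 0 = ∑ i ∈ univ.erase 0, gammaN S (g 0) g i * g i) :
    g 0 = ∏ i ∈ univ.erase 0, (gammaN S (g 0) g i + 1) := by
  have hbW : f + g 0 = ∑ i, gammaN S (g 0) g i * g i := by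
    rw [hb, gamma_sum_erase H g]
  have hbij := Finset.card_bij (s := boxF S g) (t := ApF S (g 0) f)
    (fun lam _ => ∑ i, lam i * g i)
    (fun lam hlam => (mem_ApF H).2 (box_mem H hbW (mem_boxF.1 hlam)).1)
    (fun l₁ h₁ l₂ h₂ h => box_inj H hbW (mem_boxF.1 h₁) (mem_boxF.1 h₂) h)
    ?_
  · have h5 := boxF_card H
    rw [hbij, ApF_card H] at h5
    exact h5
  · intro w hw
    obtain ⟨τ, hτ, h0, hle, _⟩ := xmax H ((mem_ApF H).1 hw)
    exact ⟨τ, mem_boxF.2 hle, hτ.1⟩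

lemma main_b_of_c (H : NS S g f)
    (hc : g 0 = ∏ i ∈ univ.erase 0, (gammaN S (g 0) g i + 1)) :
    f + g 0 = ∑ i ∈ univ.erase 0, gammaN S (g 0) g i * g i := by
  classical
  have hcard : (boxF S g).card ≤ (ApF S (g 0) f).card := by
    rw [ApF_card H, boxF_card H]
    omega
  have hsurj := Finset.surj_on_of_inj_on_of_card_le (s := ApF S (g 0) f) (t := boxF S g)
    (fun w hw => Classical.choose (xmax H ((mem_ApF H).1 hw)))
    (fun w hw => mem_boxF.2 (Classical.choose_spec (xmax H ((mem_ApF H).1 hw))).2.2.1)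
    (fun w₁ w₂ hw₁ hw₂ heq => by
      have heq' : Classical.choose (xmax H ((mem_ApF H).1 hw₁))
          = Classical.choose (xmax H ((mem_ApF H).1 hw₂)) := heq
      have e1 := (Classical.choose_spec (xmax H ((mem_ApF H).1 hw₁))).1.1
      have e2 := (Classical.choose_spec (xmax H ((mem_ApF H).1 hw₂))).1.1
      rw [← e1, ← e2, heq'])
    hcard
  obtain ⟨w, hw, hweq⟩ := hsurj (fun i => gammaN S (g 0) g i)
    (mem_boxF.2 (fun i => le_rfl))
  have hweq' : (fun i => gammaN S (g 0) g i)
      = Classical.choose (xmax H ((mem_ApF H).1 hw)) := hweq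
  have e0 := (Classical.choose_spec (xmax H ((mem_ApF H).1 hw))).1.1
  rw [← hweq'] at e0
  have e1 : ∑ i, gammaN S (g 0) g i * g i = w := e0
  -- e1 : ∑ i, gammaN i * g i = w, and w ∈ Ap
  have h2 : ∑ i, gammaN S (g 0) g i * g i ≤ f + g 0 := by
    rw [e1]
    exact apery_le H ((mem_ApF H).1 hw)
  obtain ⟨τ, hτ, h0, hle, _⟩ := xmax H (W_mem_apery H)
  have h3 : ∑ i, τ i * g i ≤ ∑ i, gammaN S (g 0) g i * g i :=
    Finset.sum_le_sum (fun i _ => Nat.mul_le_mul_right (g i) (hle i))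
  have h4 := hτ.1
  rw [gamma_sum_erase H g]
  omega

end GR
theorem gammaRect_characterization (S : Set ℕ) {ν : ℕ} [NeZero ν] (g : Fin ν → ℕ) (hν : 2 ≤ ν)
    (hS : IsNumSgp S) (hgen : MinimalGen S g) (hmono : StrictMono g)
    (hmpos : 0 < g 0) (hmul : ∀ s ∈ S, s ≠ 0 → g 0 ≤ s)
    (f : ℕ) (hf : f ∉ S) (hfmax : ∀ n, f < n → n ∈ S) :
    (AperySet S (g 0) = GammaSet S (g 0) g ↔
        f + g 0 = ∑ i ∈ Finset.univ.erase 0, gammaN S (g 0) g i * g i) ∧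
    (f + g 0 = ∑ i ∈ Finset.univ.erase 0, gammaN S (g 0) g i * g i ↔
        g 0 = ∏ i ∈ Finset.univ.erase 0, (gammaN S (g 0) g i + 1)) := by
  have H : GR.NS S g f := ⟨hS.2.1, hgen.1, hmono, hmpos, hf, hfmax⟩
  exact ⟨⟨GR.main_b_of_a H, GR.main_a_of_b H⟩, ⟨GR.main_c_of_b H, GR.main_b_of_c H⟩⟩
end

section
/- If Ap(S) is β-rectangular, then the unique maximal element of (Ap(S), ⪯_M) is f + m = Σ_{i=2}^ν β_i g_i, and every ω ∈ Ap(S) satisfies ω ⪯_M f + m. -/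
open Finset

section Helpers

variable {S : Set ℕ}

/-- The set whose supremum defines `ordS`. -/
def ordSet (S : Set ℕ) (s : ℕ) : Set ℕ :=
  {h : ℕ | ∃ f : Fin h → ℕ, (∀ j, f j ∈ S ∧ f j ≠ 0) ∧ ∑ j, f j = s}

lemma ordS_def (S : Set ℕ) (s : ℕ) : ordS S s = sSup (ordSet S s) := rfl

lemma le_of_mem_ordSet {s h : ℕ} (hh : h ∈ ordSet S s) : h ≤ s := by
  obtain ⟨f, hf, rfl⟩ := hh
  calc h = ∑ _j : Fin h, 1 := by simp
  _ ≤ ∑ j, f j := Finset.sum_le_sum fun j _ => Nat.one_le_iff_ne_zero.2 (hf j).2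

lemma bddAbove_ordSet (s : ℕ) : BddAbove (ordSet S s) :=
  ⟨s, fun _ hh => le_of_mem_ordSet hh⟩

lemma ordSet_nonempty {s : ℕ} (hs : s ∈ S) : (ordSet S s).Nonempty := by
  rcases eq_or_ne s 0 with rfl | h
  · exact ⟨0, Fin.elim0, fun j => j.elim0, by simp⟩
  · exact ⟨1, fun _ => s, fun _ => ⟨hs, h⟩, by simp⟩

lemma ordS_mem {s : ℕ} (hs : s ∈ S) : ordS S s ∈ ordSet S s :=
  Nat.sSup_mem (ordSet_nonempty hs) (bddAbove_ordSet s)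

lemma le_ordS {s h : ℕ} (hh : h ∈ ordSet S s) : h ≤ ordS S s :=
  le_csSup (bddAbove_ordSet s) hh

lemma mem_ordSet_of_multiset {s : ℕ} (M : Multiset ℕ)
    (hM : ∀ x ∈ M, x ∈ S ∧ x ≠ 0) (hsum : M.sum = s) :
    Multiset.card M ∈ ordSet S s := by
  obtain ⟨l, rfl⟩ := M.exists_rep
  simp only [Multiset.quot_mk_to_coe, Multiset.coe_card]
  refine ⟨fun j => l.get j, fun j => hM _ ?_, ?_⟩
  · exact Multiset.mem_coe.2 (l.get_mem j)
  · rw [← hsum]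
    simpa using Fin.sum_univ_get l

lemma exists_multiset_of_mem_ordSet {s h : ℕ} (hh : h ∈ ordSet S s) :
    ∃ M : Multiset ℕ, Multiset.card M = h ∧ (∀ x ∈ M, x ∈ S ∧ x ≠ 0) ∧ M.sum = s := by
  obtain ⟨f, hf, rfl⟩ := hh
  refine ⟨Multiset.map f Finset.univ.val, by simp, ?_, ?_⟩
  · intro x hx
    obtain ⟨j, _, rfl⟩ := Multiset.mem_map.1 hx
    exact hf j
  · rfl

lemma ordS_superadd {a b : ℕ} (ha : a ∈ S) (hb : b ∈ S) :
    ordS S a + ordS S b ≤ ordS S (a + b) := by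
  obtain ⟨M, hMc, hMm, hMs⟩ := exists_multiset_of_mem_ordSet (ordS_mem ha)
  obtain ⟨N, hNc, hNm, hNs⟩ := exists_multiset_of_mem_ordSet (ordS_mem hb)
  have hmem := mem_ordSet_of_multiset (S := S) (s := a + b) (M + N)
    (fun x hx => by rcases Multiset.mem_add.1 hx with h | h; exacts [hMm x h, hNm x h])
    (by rw [Multiset.sum_add, hMs, hNs])
  simpa [hMc, hNc] using le_ordS hmem

variable {ν : ℕ} {g : Fin ν → ℕ}

lemma sum_mem_ordSet (hgS : ∀ i, g i ∈ S) (hg0 : ∀ i, g i ≠ 0) (lam : Fin ν → ℕ) :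
    (∑ i, lam i) ∈ ordSet S (∑ i, lam i * g i) := by
  have key : ∀ s : Finset (Fin ν),
      Multiset.card (∑ i ∈ s, Multiset.replicate (lam i) (g i)) = ∑ i ∈ s, lam i ∧
      (∑ i ∈ s, Multiset.replicate (lam i) (g i)).sum = ∑ i ∈ s, lam i * g i := by
    intro s
    induction s using Finset.cons_induction with
    | empty => simp
    | cons a s ha ih =>
      simp [Finset.sum_cons, Finset.sum_insert ha, Multiset.sum_add, ih.1, ih.2,
        Multiset.sum_replicate, smul_eq_mul]
  have hmem := mem_ordSet_of_multiset (S := S) (s := ∑ i, lam i * g i)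
    (∑ i, Multiset.replicate (lam i) (g i))
    (fun x hx => by
      obtain ⟨i, -, hxi⟩ := Multiset.mem_sum.1 hx
      rw [Multiset.eq_of_mem_replicate hxi]
      exact ⟨hgS i, hg0 i⟩)
    (key Finset.univ).2
  rwa [(key Finset.univ).1] at hmem

lemma ordS_ge_sum (hgS : ∀ i, g i ∈ S) (hg0 : ∀ i, g i ≠ 0) (lam : Fin ν → ℕ) :
    ∑ i, lam i ≤ ordS S (∑ i, lam i * g i) :=
  le_ordS (sum_mem_ordSet hgS hg0 lam)

lemma exists_maxRep (hgen : Generates S g) (hgS : ∀ i, g i ∈ S) (hg0 : ∀ i, g i ≠ 0)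
    {s : ℕ} (hs : s ∈ S) :
    ∃ lam : Fin ν → ℕ, ∑ i, lam i * g i = s ∧ ∑ i, lam i = ordS S s := by
  obtain ⟨M, hMc, hMm, hMs⟩ := exists_multiset_of_mem_ordSet (ordS_mem hs)
  have hL : ∀ x : ℕ, ∃ lam : Fin ν → ℕ,
      (x ∈ S → ∑ i, lam i * g i = x) ∧ (x ∈ S → x ≠ 0 → 1 ≤ ∑ i, lam i) := by
    intro x
    by_cases hx : x ∈ S
    · obtain ⟨lam, hlam⟩ := (hgen x).1 hx
      refine ⟨lam, fun _ => hlam, fun _ hx0 => ?_⟩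
      by_contra h
      push_neg at h
      have : lam = 0 := by
        funext i
        have := Finset.sum_eq_zero_iff.1 (Nat.lt_one_iff.1 h) i (Finset.mem_univ i)
        simpa using this
      rw [this] at hlam
      simp at hlam
      exact hx0 hlam.symm
    · exact ⟨0, fun h => absurd h hx, fun h => absurd h hx⟩
  choose L hL1 hL2 using hL
  have key : ∀ M : Multiset ℕ, (∀ x ∈ M, x ∈ S ∧ x ≠ 0) →
      (∑ i, ((M.map L).sum) i * g i = M.sum ∧
        Multiset.card M ≤ ∑ i, ((M.map L).sum) i) := by
    intro M
    induction M using Multiset.induction with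
    | empty => simp
    | cons a M ih =>
      intro hmem
      have ha := hmem a (Multiset.mem_cons_self a M)
      obtain ⟨ih1, ih2⟩ := ih (fun x hx => hmem x (Multiset.mem_cons_of_mem hx))
      constructor
      · simp only [Multiset.map_cons, Multiset.sum_cons, Multiset.sum_cons, Pi.add_apply,
          add_mul, Finset.sum_add_distrib, ih1, hL1 a ha.1]
      · have h1 := hL2 a ha.1 ha.2
        simp only [Multiset.map_cons, Multiset.sum_cons, Multiset.card_cons, Pi.add_apply,
          Finset.sum_add_distrib]
        omega
  obtain ⟨k1, k2⟩ := key M hMm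
  refine ⟨(M.map L).sum, by rw [k1, hMs], le_antisymm ?_ ?_⟩
  · have := ordS_ge_sum (S := S) hgS hg0 ((M.map L).sum)
    rwa [k1, hMs] at this
  · omega

end Helpers

section AperyHelpers

variable {S : Set ℕ}

lemma apery_le {m f : ℕ} (hm : 0 < m) (hfmax : ∀ n, f < n → n ∈ S)
    {ω : ℕ} (hω : InApery S m ω) : ω ≤ f + m := by
  by_contra h
  push_neg at h
  exact hω.2 (ω - m) (hfmax _ (by omega)) (by omega)

lemma apery_add_left (hadd : ∀ a ∈ S, ∀ b ∈ S, a + b ∈ S) {m a b : ℕ}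
    (ha : a ∈ S) (hb : b ∈ S) (hω : InApery S m (a + b)) : InApery S m a :=
  ⟨ha, fun u hu hum => hω.2 (u + b) (hadd _ hu _ hb) (by omega)⟩

variable {ν : ℕ} [NeZero ν] {g : Fin ν → ℕ}

lemma apery_lam_zero (hmemS : ∀ lam : Fin ν → ℕ, (∑ i, lam i * g i) ∈ S)
    {lam : Fin ν → ℕ} {ω : ℕ} (hrep : ∑ i, lam i * g i = ω)
    (hω : InApery S (g 0) ω) : lam 0 = 0 := by
  by_contra h
  set lam' : Fin ν → ℕ := Function.update lam 0 (lam 0 - 1) with hlam'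
  have hsum : ∑ i, lam' i * g i + g 0 = ω := by
    rw [← hrep, ← Finset.add_sum_erase _ (fun i => lam i * g i) (Finset.mem_univ 0),
      ← Finset.add_sum_erase _ (fun i => lam' i * g i) (Finset.mem_univ 0)]
    have h1 : ∀ i ∈ Finset.univ.erase (0 : Fin ν), lam' i * g i = lam i * g i := by
      intro i hi
      rw [hlam', Function.update_of_ne (Finset.mem_erase.1 hi).1]
    rw [Finset.sum_congr rfl h1]
    have h2 : lam' 0 = lam 0 - 1 := Function.update_self _ _ _
    rw [h2, Nat.sub_one_mul]
    have h3 : g 0 ≤ lam 0 * g 0 := Nat.le_mul_of_pos_left _ (Nat.pos_of_ne_zero h)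
    omega
  exact hω.2 _ (hmemS lam') hsum

lemma maxRep_le_beta (hadd : ∀ a ∈ S, ∀ b ∈ S, a + b ∈ S)
    (hgS : ∀ i, g i ∈ S) (hg0 : ∀ i, g i ≠ 0)
    (hmemS : ∀ lam : Fin ν → ℕ, (∑ i, lam i * g i) ∈ S)
    {f : ℕ} (hfmax : ∀ n, f < n → n ∈ S) (hmpos : 0 < g 0)
    {ω : ℕ} {lam : Fin ν → ℕ} (hω : InApery S (g 0) ω)
    (h1 : ∑ i, lam i * g i = ω) (h2 : ∑ i, lam i = ordS S ω) (i : Fin ν) :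
    lam i ≤ betaN S (g 0) g i := by
  have hsplit : lam i * g i + ∑ j ∈ Finset.univ.erase i, lam j * g j = ω := by
    rw [← h1, Finset.add_sum_erase _ (fun j => lam j * g j) (Finset.mem_univ i)]
  -- the rest is in S
  have hrest_rep : ∑ j, (Function.update lam i 0) j * g j
      = ∑ j ∈ Finset.univ.erase i, lam j * g j := by
    rw [← Finset.add_sum_erase _ (fun j => (Function.update lam i 0) j * g j)
      (Finset.mem_univ i), Function.update_self]
    simp only [zero_mul, zero_add]
    exact Finset.sum_congr rfl fun j hj =>
      by rw [Function.update_of_ne (Finset.mem_erase.1 hj).1]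
  have hrest : (∑ j ∈ Finset.univ.erase i, lam j * g j) ∈ S := by
    rw [← hrest_rep]; exact hmemS _
  have hself : (lam i * g i) ∈ S := by
    have := hmemS (fun j => if j = i then lam i else 0)
    simpa [Finset.sum_ite_eq'] using this
  have hApi : InApery S (g 0) (lam i * g i) := by
    refine apery_add_left hadd hself hrest ?_
    rwa [hsplit]
  -- ord (lam i * g i) = lam i
  have hge : lam i ≤ ordS S (lam i * g i) := by
    have := ordS_ge_sum (S := S) hgS hg0 (fun j => if j = i then lam i else 0)
    simpa [Finset.sum_ite_eq'] using this
  have hrest_ord : ∑ j ∈ Finset.univ.erase i, lam j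
      ≤ ordS S (∑ j ∈ Finset.univ.erase i, lam j * g j) := by
    have := ordS_ge_sum (S := S) hgS hg0 (Function.update lam i 0)
    rw [hrest_rep] at this
    refine le_trans (le_of_eq ?_) this
    rw [← Finset.add_sum_erase _ (Function.update lam i 0) (Finset.mem_univ i),
      Function.update_self, zero_add]
    exact (Finset.sum_congr rfl fun j hj =>
      by rw [Function.update_of_ne (Finset.mem_erase.1 hj).1]).symm
  have hle : ordS S (lam i * g i) ≤ lam i := by
    by_contra hcon
    push_neg at hcon
    have h3 := ordS_superadd hself hrest
    rw [hsplit] at h3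
    have h4 : lam i + ∑ j ∈ Finset.univ.erase i, lam j = ordS S ω := by
      rw [← h2, Finset.add_sum_erase _ lam (Finset.mem_univ i)]
    omega
  -- bounded above
  have hbdd : BddAbove {h : ℕ | InApery S (g 0) (h * g i) ∧ ordS S (h * g i) = h} := by
    refine ⟨f + g 0, fun h hh => ?_⟩
    have hle' : h * g i ≤ f + g 0 := apery_le hmpos hfmax hh.1
    have : h ≤ h * g i := Nat.le_mul_of_pos_right _ (Nat.pos_of_ne_zero (hg0 i))
    omega
  exact le_csSup hbdd ⟨hApi, le_antisymm hle hge⟩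

end AperyHelpers

theorem betaRect_max_element (S : Set ℕ) {ν : ℕ} [NeZero ν] (g : Fin ν → ℕ) (hν : 2 ≤ ν)
    (hS : IsNumSgp S) (hgen : MinimalGen S g) (hmono : StrictMono g)
    (hmpos : 0 < g 0) (hmul : ∀ s ∈ S, s ≠ 0 → g 0 ≤ s)
    (f : ℕ) (hf : f ∉ S) (hfmax : ∀ n, f < n → n ∈ S)
    (hrect : AperySet S (g 0) = Bset S (g 0) g) :
    f + g 0 = ∑ i ∈ Finset.univ.erase 0, betaN S (g 0) g i * g i ∧
    (∀ ω, InApery S (g 0) ω → predM S ω (f + g 0)) ∧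
    (∀ w, InApery S (g 0) w →
      (∀ t, InApery S (g 0) t → predM S w t → t = w) → w = f + g 0) := by
  obtain ⟨h0S, hadd, hfin⟩ := hS
  have hgpos : ∀ i, 0 < g i := fun i =>
    lt_of_lt_of_le hmpos (hmono.monotone (Fin.zero_le i))
  have hg0 : ∀ i, g i ≠ 0 := fun i => (hgpos i).ne'
  have hmemS : ∀ lam : Fin ν → ℕ, (∑ i, lam i * g i) ∈ S :=
    fun lam => (hgen.1 _).2 ⟨lam, rfl⟩
  have hgS : ∀ i, g i ∈ S := by
    intro i
    have := hmemS (fun j => if j = i then 1 else 0)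
    simpa [Finset.sum_ite_eq'] using this
  set m := g 0 with hm
  have hfm : InApery S m (f + m) := by
    refine ⟨hfmax _ (by omega), fun u hu hum => ?_⟩
    have : u = f := by omega
    exact hf (this ▸ hu)
  have hfmB : (f + m) ∈ Bset S m g := hrect ▸ hfm
  obtain ⟨μ, hμ0, hμβ, hμs⟩ := hfmB
  set lβ : Fin ν → ℕ := fun i => if i = 0 then 0 else betaN S m g i with hlβ
  have hlβ0 : lβ 0 = 0 := if_pos rfl
  have hlβle : ∀ i, lβ i ≤ betaN S m g i := fun i => by
    by_cases h : i = 0 <;> simp [hlβ, h]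
  have hBtot : ∑ i, lβ i * g i = ∑ i ∈ Finset.univ.erase 0, betaN S m g i * g i := by
    rw [← Finset.add_sum_erase _ (fun i => lβ i * g i) (Finset.mem_univ 0), hlβ0,
      zero_mul, zero_add]
    exact Finset.sum_congr rfl fun i hi => by
      simp only [hlβ, if_neg (Finset.mem_erase.1 hi).1]
  have h1le : f + m ≤ ∑ i ∈ Finset.univ.erase 0, betaN S m g i * g i := by
    calc f + m = ∑ i, μ i * g i := hμs.symm
    _ ≤ ∑ i, lβ i * g i := by
        refine Finset.sum_le_sum fun i _ => Nat.mul_le_mul_right _ ?_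
        by_cases h : i = 0
        · subst h; simp [hμ0, hlβ0]
        · simp only [hlβ, if_neg h]; exact hμβ i
    _ = _ := hBtot
  have h2le : ∑ i, lβ i * g i ≤ f + m := by
    have hmem : (∑ i, lβ i * g i) ∈ AperySet S m := by
      rw [hrect]; exact ⟨lβ, hlβ0, hlβle, rfl⟩
    exact apery_le hmpos hfmax hmem
  have heq : ∑ i, lβ i * g i = f + m :=
    le_antisymm h2le (by rw [hBtot]; exact h1le)
  have part1 : f + m = ∑ i ∈ Finset.univ.erase 0, betaN S m g i * g i := by
    rw [← hBtot]; exact heq.symm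
  have hOrdfm : ordS S (f + m) = ∑ i, lβ i := by
    apply le_antisymm
    · obtain ⟨lamM, hM1, hM2⟩ := exists_maxRep hgen.1 hgS hg0 hfm.1
      have hMβ : ∀ i, lamM i ≤ betaN S m g i := fun i =>
        maxRep_le_beta hadd hgS hg0 hmemS hfmax hmpos hfm hM1 hM2 i
      have hM0 : lamM 0 = 0 := apery_lam_zero hmemS hM1 hfm
      rw [← hM2]
      refine Finset.sum_le_sum fun i _ => ?_
      by_cases h : i = 0
      · subst h; simp [hM0]
      · simp only [hlβ, if_neg h]; exact hMβ i
    · have := ordS_ge_sum (S := S) hgS hg0 lβ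
      rwa [heq] at this
  have part2 : ∀ ω, InApery S m ω → predM S ω (f + m) := by
    intro ω hω
    obtain ⟨lam, h1, h2⟩ := exists_maxRep hgen.1 hgS hg0 hω.1
    have hlamβ : ∀ i, lam i ≤ lβ i := by
      intro i
      by_cases h : i = 0
      · subst h
        rw [apery_lam_zero hmemS h1 hω]
        exact Nat.zero_le _
      · simp only [hlβ, if_neg h]
        exact maxRep_le_beta hadd hgS hg0 hmemS hfmax hmpos hω h1 h2 i
    set lam' : Fin ν → ℕ := fun i => lβ i - lam i with hlam'
    have hu : (∑ i, lam' i * g i) ∈ S := hmemS _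
    have hωu : ω + ∑ i, lam' i * g i = f + m := by
      rw [← h1, ← Finset.sum_add_distrib, ← heq]
      refine Finset.sum_congr rfl fun i _ => ?_
      rw [← add_mul]
      congr 1
      have := hlamβ i
      simp only [hlam']
      omega
    have hub : ordS S ω + ordS S (∑ i, lam' i * g i) ≤ ordS S (f + m) := by
      rw [← hωu]; exact ordS_superadd hω.1 hu
    have hglam' : ∑ i, lam' i ≤ ordS S (∑ i, lam' i * g i) :=
      ordS_ge_sum (S := S) hgS hg0 lam'
    have hsum' : ∑ i, lam i + ∑ i, lam' i = ∑ i, lβ i := by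
      rw [← Finset.sum_add_distrib]
      refine Finset.sum_congr rfl fun i _ => ?_
      have := hlamβ i
      simp only [hlam']
      omega
    exact ⟨_, hu, hωu, by omega⟩
  exact ⟨part1, part2, fun w hw hmax => (hmax (f + m) hfm (part2 w hw)).symm⟩
end

section
/- Let n_ν < n_{ν-1} < … < n_1 be pairwise relatively prime positive integers, N = Π_{i=1}^ν n_i, g_i = N / n_i, and S = ⟨g_1, …, g_ν⟩. Then the Apéry set of S with respect to its multiplicity m = g_1 is γ-rectangular; in particular m = Π_{i=2}^ν (γ_i + 1). -/
open Finset

lemma sum_split3 {ν : ℕ} [NeZero ν] {j : Fin ν} (hj : j ≠ 0) (f : Fin ν → ℕ) :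
    ∑ k, f k = f 0 + (f j + ∑ k ∈ (univ.erase 0).erase j, f k) := by
  rw [← Finset.add_sum_erase _ f (mem_univ (0 : Fin ν)),
    ← Finset.add_sum_erase _ f (mem_erase.2 ⟨hj, mem_univ j⟩)]

lemma sum_split2 {ν : ℕ} [NeZero ν] {j : Fin ν} (hj : j ≠ 0) (f : Fin ν → ℕ) :
    ∑ k ∈ univ.erase 0, f k = f j + ∑ k ∈ (univ.erase 0).erase j, f k := by
  rw [← Finset.add_sum_erase _ f (mem_erase.2 ⟨hj, mem_univ j⟩)]

lemma step_lemma {ν : ℕ} [NeZero ν] (n g : Fin ν → ℕ)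
    (hng : ∀ i, n i * g i = n 0 * g 0)
    {j : Fin ν} (hj : j ≠ 0) (μ : Fin ν → ℕ) (hle : n j ≤ μ j) :
    ∃ μ' : Fin ν → ℕ,
      (∑ k, μ' k * g k = ∑ k, μ k * g k) ∧
      (∑ k, μ' k) + n j = (∑ k, μ k) + n 0 ∧
      (∑ k ∈ univ.erase 0, μ' k) + n j = ∑ k ∈ univ.erase 0, μ k := by
  classical
  set μ' : Fin ν → ℕ := fun k => if k = 0 then μ 0 + n 0 else if k = j then μ j - n j else μ k
    with hμ'
  have h0 : μ' 0 = μ 0 + n 0 := by simp [hμ']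
  have hjv : μ' j = μ j - n j := by simp [hμ', hj]
  have hrest : ∀ k ∈ (univ.erase 0).erase j, μ' k = μ k := by
    intro k hk
    obtain ⟨hk1, hk2⟩ := mem_erase.1 hk
    obtain ⟨hk3, _⟩ := mem_erase.1 hk2
    simp [hμ', hk1, hk3]
  have hrestg : ∑ k ∈ (univ.erase 0).erase j, μ' k * g k = ∑ k ∈ (univ.erase 0).erase j, μ k * g k :=
    Finset.sum_congr rfl (fun k hk => by rw [hrest k hk])
  have hrests : ∑ k ∈ (univ.erase 0).erase j, μ' k = ∑ k ∈ (univ.erase 0).erase j, μ k :=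
    Finset.sum_congr rfl hrest
  have key : (μ j - n j) * g j + n 0 * g 0 = μ j * g j := by
    rw [← hng j, ← add_mul, Nat.sub_add_cancel hle]
  refine ⟨μ', ?_, ?_, ?_⟩
  · rw [sum_split3 hj (fun k => μ' k * g k), sum_split3 hj (fun k => μ k * g k), h0, hjv, hrestg]
    set a := μ 0 * g 0; set b := n 0 * g 0; set c := (μ j - n j) * g j; set d := μ j * g j
    have : (μ 0 + n 0) * g 0 = a + b := by rw [add_mul]
    omega
  · rw [sum_split3 hj μ', sum_split3 hj μ, h0, hjv, hrests]
    have h0n := hng 0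
    omega
  · rw [sum_split2 hj μ', sum_split2 hj μ, hjv, hrests]
    omega

lemma reduce_lemma {ν : ℕ} [NeZero ν] (n g : Fin ν → ℕ)
    (hng : ∀ i, n i * g i = n 0 * g 0) (hn1 : ∀ i, 1 ≤ n i)
    (hn0 : ∀ j, j ≠ 0 → n j ≤ n 0) :
    ∀ (E : ℕ) (μ : Fin ν → ℕ), (∑ k ∈ univ.erase 0, μ k) ≤ E →
      ∃ lam : Fin ν → ℕ, (∀ j, j ≠ 0 → lam j < n j) ∧
        (∑ k, lam k * g k = ∑ k, μ k * g k) ∧ (∑ k, μ k ≤ ∑ k, lam k) := by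
  intro E
  induction E with
  | zero =>
    intro μ hμ
    refine ⟨μ, fun j hj => ?_, rfl, le_rfl⟩
    have := Finset.sum_eq_zero_iff.1 (Nat.le_zero.1 hμ) j (mem_erase.2 ⟨hj, mem_univ j⟩)
    have := hn1 j
    omega
  | succ E ih =>
    intro μ hμ
    by_cases hall : ∀ j, j ≠ 0 → μ j < n j
    · exact ⟨μ, hall, rfl, le_rfl⟩
    · push_neg at hall
      obtain ⟨j, hj, hle⟩ := hall
      obtain ⟨μ', h1, h2, h3⟩ := step_lemma n g hng hj μ hle
      have hE : ∑ k ∈ univ.erase 0, μ' k ≤ E := by have := hn1 j; omega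
      obtain ⟨lam, ha, hb, hc⟩ := ih μ' hE
      refine ⟨lam, ha, by rw [hb, h1], ?_⟩
      have := hn0 j hj
      omega

lemma reduce_strict {ν : ℕ} [NeZero ν] (n g : Fin ν → ℕ)
    (hng : ∀ i, n i * g i = n 0 * g 0) (hn1 : ∀ i, 1 ≤ n i)
    (hnlt : ∀ j, j ≠ 0 → n j < n 0) (μ : Fin ν → ℕ)
    {j : Fin ν} (hj : j ≠ 0) (hle : n j ≤ μ j) :
    ∃ lam : Fin ν → ℕ, (∀ j, j ≠ 0 → lam j < n j) ∧
      (∑ k, lam k * g k = ∑ k, μ k * g k) ∧ (∑ k, μ k < ∑ k, lam k) := by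
  obtain ⟨μ', h1, h2, _⟩ := step_lemma n g hng hj μ hle
  obtain ⟨lam, ha, hb, hc⟩ := reduce_lemma n g hng hn1 (fun j hj => (hnlt j hj).le)
    (∑ k ∈ univ.erase 0, μ' k) μ' le_rfl
  exact ⟨lam, ha, by rw [hb, h1], by have := hnlt j hj; omega⟩

lemma rep_unique {ν : ℕ} [NeZero ν] (n g : Fin ν → ℕ) (hg0 : 0 < g 0)
    (hn1 : ∀ i, 1 ≤ n i)
    (hdvd : ∀ i j, i ≠ j → n i ∣ g j) (hcopg : ∀ i, Nat.Coprime (n i) (g i))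
    (lam mu : Fin ν → ℕ) (hlam : ∀ j, j ≠ 0 → lam j < n j) (hmu : ∀ j, j ≠ 0 → mu j < n j)
    (heq : ∑ k, lam k * g k = ∑ k, mu k * g k) : lam = mu := by
  classical
  have hj : ∀ j, j ≠ 0 → lam j = mu j := by
    intro j hjne
    haveI : NeZero (n j) := ⟨by have := hn1 j; omega⟩
    have hcast : ∀ la : Fin ν → ℕ, ((∑ k, la k * g k : ℕ) : ZMod (n j)) = (la j : ZMod (n j)) * (g j : ZMod (n j)) := by
      intro la
      push_cast
      refine Finset.sum_eq_single j (fun k _ hk => ?_) (by simp)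
      have : ((g k : ℕ) : ZMod (n j)) = 0 :=
        (ZMod.natCast_eq_zero_iff _ _).2 (hdvd j k (Ne.symm hk))
      rw [this, mul_zero]
    have h1 : (lam j : ZMod (n j)) * (g j) = (mu j : ZMod (n j)) * (g j) := by
      rw [← hcast lam, ← hcast mu, heq]
    have hu : IsUnit ((g j : ℕ) : ZMod (n j)) :=
      (ZMod.isUnit_iff_coprime (g j) (n j)).2 ((hcopg j).symm)
    have h2 : (lam j : ZMod (n j)) = (mu j : ZMod (n j)) := hu.mul_right_cancel h1
    have := congrArg ZMod.val h2
    rwa [ZMod.val_cast_of_lt (hlam j hjne), ZMod.val_cast_of_lt (hmu j hjne)] at this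
  funext k
  by_cases hk : k = 0
  · subst hk
    rw [← Finset.add_sum_erase _ (fun k => lam k * g k) (mem_univ (0 : Fin ν)),
      ← Finset.add_sum_erase _ (fun k => mu k * g k) (mem_univ (0 : Fin ν))] at heq
    have hr : ∑ k ∈ univ.erase 0, lam k * g k = ∑ k ∈ univ.erase 0, mu k * g k :=
      Finset.sum_congr rfl (fun k hk => by rw [hj k (mem_erase.1 hk).1])
    have : lam 0 * g 0 = mu 0 * g 0 := by omega
    exact Nat.eq_of_mul_eq_mul_right hg0 this
  · exact hj k hk

lemma exists_f {ν : ℕ} (g : Fin ν → ℕ) :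
    ∀ (h : ℕ) (lam : Fin ν → ℕ), ∑ k, lam k = h →
      ∃ f : Fin h → ℕ, (∀ j, ∃ i, f j = g i) ∧ ∑ j, f j = ∑ k, lam k * g k := by
  intro h
  induction h with
  | zero =>
    intro lam hlam
    refine ⟨fun j => 0, fun j => j.elim0, ?_⟩
    have : ∀ k ∈ (univ : Finset (Fin ν)), lam k * g k = 0 := by
      intro k hk
      have := Finset.sum_eq_zero_iff.1 hlam k hk
      simp [this]
    simp [Finset.sum_eq_zero this]
  | succ h ih =>
    intro lam hlam
    have hex : ∃ i, 0 < lam i := by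
      by_contra hc
      push_neg at hc
      have : ∑ k, lam k = 0 := Finset.sum_eq_zero (fun k _ => Nat.le_zero.1 (hc k))
      omega
    obtain ⟨i, hi⟩ := hex
    classical
    set lam' : Fin ν → ℕ := Function.update lam i (lam i - 1) with hlam'
    have hval : ∀ k, k ≠ i → lam' k = lam k := by
      intro k hk; simp [hlam', hk]
    have hvi : lam' i = lam i - 1 := by simp [hlam']
    have hsplit : ∀ f : Fin ν → ℕ, ∑ k, f k = f i + ∑ k ∈ univ.erase i, f k := by
      intro f; rw [Finset.add_sum_erase _ f (mem_univ i)]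
    have hrest : ∑ k ∈ univ.erase i, lam' k = ∑ k ∈ univ.erase i, lam k :=
      Finset.sum_congr rfl (fun k hk => hval k (mem_erase.1 hk).1)
    have hsum' : ∑ k, lam' k = h := by
      rw [hsplit lam', hvi, hrest]
      rw [hsplit lam] at hlam
      omega
    obtain ⟨f', hf', hsf'⟩ := ih lam' hsum'
    refine ⟨Fin.cons (g i) f', ?_, ?_⟩
    · intro j
      refine Fin.cases ⟨i, rfl⟩ (fun j' => hf' j') j
    · rw [Fin.sum_cons, hsf']
      rw [hsplit (fun k => lam' k * g k), hsplit (fun k => lam k * g k), hvi]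
      have hrg : ∑ k ∈ univ.erase i, lam' k * g k = ∑ k ∈ univ.erase i, lam k * g k :=
        Finset.sum_congr rfl (fun k hk => by rw [hval k (mem_erase.1 hk).1])
      rw [hrg]
      have : g i + (lam i - 1) * g i = lam i * g i := by
        have : (1 + (lam i - 1)) * g i = lam i * g i := by
          rw [add_comm, Nat.sub_add_cancel hi]
        rw [add_mul, one_mul] at this
        omega
      omega

section Ord
variable {ν : ℕ} [NeZero ν] (n g : Fin ν → ℕ) (S : Set ℕ)

-- maximality of the canonical representation among all representations
lemma max_rep (hng : ∀ i, n i * g i = n 0 * g 0) (hn1 : ∀ i, 1 ≤ n i)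
    (hn0 : ∀ j, j ≠ 0 → n j ≤ n 0) (hg0 : 0 < g 0)
    (hdvd : ∀ i j, i ≠ j → n i ∣ g j) (hcopg : ∀ i, Nat.Coprime (n i) (g i))
    (lam : Fin ν → ℕ) (hlam : ∀ j, j ≠ 0 → lam j < n j)
    (mu : Fin ν → ℕ) (hmu : ∑ k, mu k * g k = ∑ k, lam k * g k) :
    ∑ k, mu k ≤ ∑ k, lam k := by
  obtain ⟨lam', h1, h2, h3⟩ := reduce_lemma n g hng hn1 hn0 (∑ k ∈ univ.erase 0, mu k) mu le_rfl
  have heq : lam' = lam := rep_unique n g hg0 hn1 hdvd hcopg lam' lam h1 hlam (by rw [h2, hmu])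
  rw [heq] at h3
  exact h3

lemma ord_eq (hS : S = {s | ∃ lam : Fin ν → ℕ, ∑ i, lam i * g i = s})
    (hng : ∀ i, n i * g i = n 0 * g 0) (hn1 : ∀ i, 1 ≤ n i)
    (hn0 : ∀ j, j ≠ 0 → n j ≤ n 0) (hgpos : ∀ i, 0 < g i)
    (hdvd : ∀ i j, i ≠ j → n i ∣ g j) (hcopg : ∀ i, Nat.Coprime (n i) (g i))
    (lam : Fin ν → ℕ) (hlam : ∀ j, j ≠ 0 → lam j < n j) :
    ordS S (∑ k, lam k * g k) = ∑ k, lam k := by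
  classical
  apply IsGreatest.csSup_eq
  constructor
  · -- membership
    obtain ⟨f, hf, hsf⟩ := exists_f g (∑ k, lam k) lam rfl
    refine ⟨f, fun j => ?_, hsf⟩
    obtain ⟨i, hi⟩ := hf j
    constructor
    · rw [hS, hi]
      exact ⟨fun k => if k = i then 1 else 0, by simp [ite_mul]⟩
    · rw [hi]; exact (hgpos i).ne'
  · intro h hh
    obtain ⟨f, hf, hsf⟩ := hh
    have hrep : ∀ j, ∃ la : Fin ν → ℕ, ∑ k, la k * g k = f j := by
      intro j
      have := (hf j).1
      rwa [hS] at this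
    choose laf hlaf using hrep
    set mu : Fin ν → ℕ := fun k => ∑ j, laf j k with hmu
    have hmurep : ∑ k, mu k * g k = ∑ k, lam k * g k := by
      calc ∑ k, (∑ j, laf j k) * g k = ∑ k, ∑ j, laf j k * g k := by
            refine Finset.sum_congr rfl (fun k _ => ?_); rw [Finset.sum_mul]
        _ = ∑ j, ∑ k, laf j k * g k := Finset.sum_comm
        _ = ∑ j, f j := Finset.sum_congr rfl (fun j _ => hlaf j)
        _ = ∑ k, lam k * g k := hsf
    have hge : h ≤ ∑ k, mu k := by
      have : ∑ k, mu k = ∑ j, ∑ k, laf j k := by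
        rw [hmu]; exact Finset.sum_comm
      rw [this]
      calc h = ∑ _j : Fin h, 1 := by simp
        _ ≤ ∑ j, ∑ k, laf j k := by
            refine Finset.sum_le_sum (fun j _ => ?_)
            by_contra hc
            push_neg at hc
            have hz : ∀ k, laf j k = 0 := by
              intro k
              have := Finset.sum_eq_zero_iff.1 (Nat.lt_one_iff.1 hc) k (mem_univ k)
              exact this
            have : f j = 0 := by
              rw [← hlaf j]
              exact Finset.sum_eq_zero (fun k _ => by rw [hz k, zero_mul])
            exact (hf j).2 this
    have := max_rep n g hng hn1 hn0 (hgpos 0) hdvd hcopg lam hlam mu hmurep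
    omega

end Ord

section Main
variable {ν : ℕ} [NeZero ν] (n g : Fin ν → ℕ) (S : Set ℕ)

lemma succ0_sum (la : Fin ν → ℕ) :
    ∑ k, (Function.update la 0 (la 0 + 1)) k * g k = ∑ k, la k * g k + g 0 := by
  classical
  rw [← Finset.add_sum_erase _ (fun k => Function.update la 0 (la 0 + 1) k * g k) (mem_univ (0 : Fin ν)),
    ← Finset.add_sum_erase _ (fun k => la k * g k) (mem_univ (0 : Fin ν))]
  have hrest : ∑ k ∈ univ.erase 0, Function.update la 0 (la 0 + 1) k * g k
      = ∑ k ∈ univ.erase 0, la k * g k :=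
    Finset.sum_congr rfl (fun k hk => by rw [Function.update_of_ne (mem_erase.1 hk).1])
  rw [hrest, Function.update_self, add_mul, one_mul]
  omega

lemma umr {ν : ℕ} [NeZero ν] (n g : Fin ν → ℕ) (S : Set ℕ)
    (hS : S = {s | ∃ lam : Fin ν → ℕ, ∑ i, lam i * g i = s})
    (hng : ∀ i, n i * g i = n 0 * g 0) (hn1 : ∀ i, 1 ≤ n i)
    (hnlt : ∀ j, j ≠ 0 → n j < n 0) (hgpos : ∀ i, 0 < g i)
    (hdvd : ∀ i j, i ≠ j → n i ∣ g j) (hcopg : ∀ i, Nat.Coprime (n i) (g i))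
    (lam : Fin ν → ℕ) (hlam : ∀ j, j ≠ 0 → lam j < n j) :
    UniqueMaxRep S g (∑ k, lam k * g k) := by
  have hn0 : ∀ j, j ≠ 0 → n j ≤ n 0 := fun j hj => (hnlt j hj).le
  have hordeq := ord_eq n g S hS hng hn1 hn0 hgpos hdvd hcopg lam hlam
  refine ⟨lam, ⟨rfl, hordeq.symm⟩, ?_⟩
  rintro mu ⟨hval, hord⟩
  rw [hordeq] at hord
  by_cases hsh : ∀ j, j ≠ 0 → mu j < n j
  · exact rep_unique n g (hgpos 0) hn1 hdvd hcopg mu lam hsh hlam hval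
  · push_neg at hsh
    obtain ⟨j, hj, hle⟩ := hsh
    obtain ⟨lam', h1, h2, h3⟩ := reduce_strict n g hng hn1 hnlt mu hj hle
    have := max_rep n g hng hn1 hn0 (hgpos 0) hdvd hcopg lam hlam lam' (by rw [h2, hval])
    omega

lemma apery_iff {ν : ℕ} [NeZero ν] (n g : Fin ν → ℕ) (S : Set ℕ)
    (hS : S = {s | ∃ lam : Fin ν → ℕ, ∑ i, lam i * g i = s})
    (hng : ∀ i, n i * g i = n 0 * g 0) (hn1 : ∀ i, 1 ≤ n i)
    (hn0 : ∀ j, j ≠ 0 → n j ≤ n 0) (hgpos : ∀ i, 0 < g i)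
    (hdvd : ∀ i j, i ≠ j → n i ∣ g j) (hcopg : ∀ i, Nat.Coprime (n i) (g i))
    (s : ℕ) :
    s ∈ AperySet S (g 0) ↔
      ∃ lam : Fin ν → ℕ, lam 0 = 0 ∧ (∀ j, j ≠ 0 → lam j < n j) ∧ ∑ k, lam k * g k = s := by
  classical
  constructor
  · rintro ⟨hsS, hap⟩
    rw [hS] at hsS
    obtain ⟨mu, hmu⟩ := hsS
    obtain ⟨lam, h1, h2, _⟩ := reduce_lemma n g hng hn1 hn0 (∑ k ∈ univ.erase 0, mu k) mu le_rfl
    rw [hmu] at h2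
    refine ⟨lam, ?_, h1, h2⟩
    by_contra h00
    set u : Fin ν → ℕ := Function.update lam 0 (lam 0 - 1) with hu
    have hlamu : Function.update u 0 (u 0 + 1) = lam := by
      funext k
      by_cases hk : k = 0
      · subst hk; simp [hu]; omega
      · simp [hu, hk]
    have husum : ∑ k, u k * g k + g 0 = s := by
      rw [← h2, ← hlamu, succ0_sum g u]
    exact hap (∑ k, u k * g k) (by rw [hS]; exact ⟨u, rfl⟩) husum
  · rintro ⟨lam, h0, hsh, hval⟩
    refine ⟨by rw [hS]; exact ⟨lam, hval⟩, ?_⟩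
    rintro u huS hequ
    rw [hS] at huS
    obtain ⟨mu, hmu⟩ := huS
    obtain ⟨mu', h1, h2, _⟩ := reduce_lemma n g hng hn1 hn0 (∑ k ∈ univ.erase 0, mu k) mu le_rfl
    set ρ : Fin ν → ℕ := Function.update mu' 0 (mu' 0 + 1) with hρ
    have hρsh : ∀ j, j ≠ 0 → ρ j < n j := by
      intro j hj; rw [hρ, Function.update_of_ne hj]; exact h1 j hj
    have hρval : ∑ k, ρ k * g k = ∑ k, lam k * g k := by
      rw [hρ, succ0_sum g mu', h2, hmu, hequ, hval]
    have := rep_unique n g (hgpos 0) hn1 hdvd hcopg ρ lam hρsh hsh hρval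
    have : ρ 0 = lam 0 := by rw [this]
    rw [hρ, Function.update_self, h0] at this
    omega

lemma gamma_eq {ν : ℕ} [NeZero ν] (n g : Fin ν → ℕ) (S : Set ℕ)
    (hS : S = {s | ∃ lam : Fin ν → ℕ, ∑ i, lam i * g i = s})
    (hng : ∀ i, n i * g i = n 0 * g 0) (hn1 : ∀ i, 1 ≤ n i)
    (hnlt : ∀ j, j ≠ 0 → n j < n 0) (hgpos : ∀ i, 0 < g i)
    (hdvd : ∀ i j, i ≠ j → n i ∣ g j) (hcopg : ∀ i, Nat.Coprime (n i) (g i))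
    (i : Fin ν) (hi : i ≠ 0) :
    gammaN S (g 0) g i = n i - 1 := by
  classical
  have hn0 : ∀ j, j ≠ 0 → n j ≤ n 0 := fun j hj => (hnlt j hj).le
  apply IsGreatest.csSup_eq
  constructor
  · -- n i - 1 belongs to the set
    set h := n i - 1 with hh
    set δ : Fin ν → ℕ := fun k => if k = i then h else 0 with hδ
    have hδsh : ∀ j, j ≠ 0 → δ j < n j := by
      intro j hj
      rw [hδ]
      by_cases hji : j = i
      · subst hji; simp; have := hn1 j; omega
      · simp [hji]; exact hn1 j
    have hδval : ∑ k, δ k * g k = h * g i := by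
      rw [hδ]; simp [ite_mul]
    have hδsum : ∑ k, δ k = h := by rw [hδ]; simp
    refine ⟨?_, ?_, ?_⟩
    · rw [show (h * g i) = ∑ k, δ k * g k from hδval.symm] at *
      rw [← hδval]
      exact (apery_iff n g S hS hng hn1 hn0 hgpos hdvd hcopg _).2
        ⟨δ, by rw [hδ]; simp [Ne.symm hi], hδsh, rfl⟩
    · rw [← hδval, ord_eq n g S hS hng hn1 hn0 hgpos hdvd hcopg δ hδsh, hδsum]
    · rw [← hδval]
      exact umr n g S hS hng hn1 hnlt hgpos hdvd hcopg δ hδsh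
  · -- upper bound
    rintro h ⟨⟨_, hap⟩, _, _⟩
    by_contra hc
    push_neg at hc
    have hhi : n i ≤ h := by have := hn1 i; omega
    set u : Fin ν → ℕ := fun k => if k = i then h - n i else if k = 0 then n 0 - 1 else 0 with hu
    have hval : ∑ k, u k * g k + g 0 = h * g i := by
      rw [sum_split3 hi (fun k => u k * g k)]
      have h0v : u 0 * g 0 = (n 0 - 1) * g 0 := by rw [hu]; simp [Ne.symm hi]
      have hiv : u i * g i = (h - n i) * g i := by rw [hu]; simp
      have hrest : ∑ k ∈ (univ.erase 0).erase i, u k * g k = 0 := by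
        refine Finset.sum_eq_zero (fun k hk => ?_)
        obtain ⟨hk1, hk2⟩ := mem_erase.1 hk
        obtain ⟨hk3, _⟩ := mem_erase.1 hk2
        rw [hu]; simp [hk1, hk3]
      rw [h0v, hiv, hrest]
      have key1 : (n 0 - 1) * g 0 + g 0 = n 0 * g 0 := by
        have h1 := hn1 0
        have : (n 0 - 1 + 1) * g 0 = n 0 * g 0 := by rw [Nat.sub_add_cancel h1]
        rw [add_mul, one_mul] at this
        omega
      have key2 : (h - n i) * g i + n i * g i = h * g i := by
        rw [← add_mul, Nat.sub_add_cancel hhi]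
      have := hng i
      omega
    exact hap (∑ k, u k * g k) (by rw [hS]; exact ⟨u, rfl⟩) hval

end Main

theorem pairwise_coprime_gammaRect {ν : ℕ} [NeZero ν] (hν : 2 ≤ ν)
    (n : Fin ν → ℕ) (hpos : ∀ i, 0 < n i) (hanti : StrictAnti n)
    (hcop : ∀ i j, i ≠ j → Nat.Coprime (n i) (n j))
    (N : ℕ) (hN : N = ∏ i, n i)
    (g : Fin ν → ℕ) (hg : ∀ i, g i = N / n i)
    (S : Set ℕ) (hS : S = {s | ∃ lam : Fin ν → ℕ, ∑ i, lam i * g i = s}) :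
    AperySet S (g 0) = GammaSet S (g 0) g ∧
      g 0 = ∏ i ∈ Finset.univ.erase 0, (gammaN S (g 0) g i + 1) := by
  classical
  have hn1 : ∀ i, 1 ≤ n i := hpos
  have hgprod : ∀ i, g i = ∏ k ∈ univ.erase i, n k := by
    intro i
    have h1 : n i * ∏ k ∈ univ.erase i, n k = N := by
      rw [hN, Finset.mul_prod_erase _ _ (mem_univ i)]
    rw [hg i, ← h1, Nat.mul_div_cancel_left _ (hpos i)]
  have hng : ∀ i, n i * g i = N := by
    intro i; rw [hgprod i, hN, Finset.mul_prod_erase _ _ (mem_univ i)]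
  have hngg : ∀ i, n i * g i = n 0 * g 0 := fun i => by rw [hng i, hng 0]
  have hNpos : 0 < N := by
    rw [hN]; exact Finset.prod_pos (fun i _ => hpos i)
  have hgpos : ∀ i, 0 < g i := by
    intro i
    rcases Nat.eq_zero_or_pos (g i) with h | h
    · have := hng i; rw [h, mul_zero] at this; omega
    · exact h
  have hdvd : ∀ i j, i ≠ j → n i ∣ g j := by
    intro i j hij
    rw [hgprod j]
    exact Finset.dvd_prod_of_mem _ (mem_erase.2 ⟨hij, mem_univ i⟩)
  have hcopg : ∀ i, Nat.Coprime (n i) (g i) := by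
    intro i
    rw [hgprod i]
    exact Nat.Coprime.prod_right (fun k hk => hcop i k (Ne.symm (mem_erase.1 hk).1))
  have hnlt : ∀ j, j ≠ 0 → n j < n 0 := fun j hj => hanti ((Fin.pos_iff_ne_zero' j).2 hj)
  have hn0 : ∀ j, j ≠ 0 → n j ≤ n 0 := fun j hj => (hnlt j hj).le
  have hγ : ∀ i, i ≠ (0 : Fin ν) → gammaN S (g 0) g i = n i - 1 :=
    fun i hi => gamma_eq n g S hS hngg hn1 hnlt hgpos hdvd hcopg i hi
  constructor
  · ext s
    rw [apery_iff n g S hS hngg hn1 hn0 hgpos hdvd hcopg s]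
    constructor
    · rintro ⟨lam, h0, hsh, hval⟩
      refine ⟨lam, h0, fun i => ?_, hval⟩
      by_cases hi : i = 0
      · subst hi; rw [h0]; exact Nat.zero_le _
      · rw [hγ i hi]
        have := hsh i hi
        have := hn1 i
        omega
    · rintro ⟨lam, h0, hle, hval⟩
      refine ⟨lam, h0, fun j hj => ?_, hval⟩
      have := hle j
      rw [hγ j hj] at this
      have := hn1 j
      omega
  · have hpr : ∏ i ∈ Finset.univ.erase 0, (gammaN S (g 0) g i + 1)
        = ∏ i ∈ Finset.univ.erase (0 : Fin ν), n i := by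
      refine Finset.prod_congr rfl (fun i hi => ?_)
      rw [hγ i (mem_erase.1 hi).1]
      have := hn1 i
      omega
    rw [hpr]
    exact hgprod 0
end

section
/- Let S = ⟨g_1, g_2, g_3⟩ be a numerical semigroup minimally generated by three elements g_1 < g_2 < g_3. If every ω ∈ Ap(S) satisfies ω ⪯_M f + m (S is M-pure symmetric), then f + m has a unique maximal representation, and consequently Ap(S) is β-rectangular. -/
open Finset

section Aux

variable {S : Set ℕ} {g : Fin 3 → ℕ}

lemma rep_mem (hgen : Generates S g) (lam : Fin 3 → ℕ) : ∑ i, lam i * g i ∈ S :=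
  (hgen _).2 ⟨lam, rfl⟩

lemma gen_mem (hgen : Generates S g) (i : Fin 3) : g i ∈ S := by
  have h : ∑ j, (Pi.single i 1 : Fin 3 → ℕ) j * g j = g i := by
    simp [Pi.single_apply, ite_mul]
  exact h ▸ rep_mem hgen _

lemma ordset_bdd (s : ℕ) :
    {h : ℕ | ∃ f : Fin h → ℕ, (∀ j, f j ∈ S ∧ f j ≠ 0) ∧ ∑ j, f j = s} ⊆ Set.Iic s := by
  rintro h ⟨f, hf, hsum⟩
  have h1 : ∀ j : Fin h, 1 ≤ f j := fun j => Nat.one_le_iff_ne_zero.2 (hf j).2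
  calc h = ∑ _j : Fin h, 1 := by simp
    _ ≤ ∑ j, f j := Finset.sum_le_sum (fun j _ => h1 j)
    _ = s := hsum

lemma rep_to_P (hgen : Generates S g) (hpos : ∀ i, g i ≠ 0) :
    ∀ (k : ℕ) (lam : Fin 3 → ℕ), ∑ i, lam i = k →
    ∃ f : Fin k → ℕ, (∀ j, f j ∈ S ∧ f j ≠ 0) ∧ ∑ j, f j = ∑ i, lam i * g i := by
  intro k
  induction k with
  | zero =>
    intro lam hlam
    have hz : ∀ i, lam i = 0 := fun i => Finset.sum_eq_zero_iff.1 hlam i (Finset.mem_univ i)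
    exact ⟨Fin.elim0, fun j => j.elim0, by simp [hz]⟩
  | succ k ih =>
    intro lam hlam
    have hex : ∃ i, lam i ≠ 0 := by
      by_contra hc
      push_neg at hc
      simp [hc] at hlam
    obtain ⟨i, hi⟩ := hex
    set lam' := Function.update lam i (lam i - 1) with hlam'
    have d1 : ∑ j, lam' j = (lam i - 1) + ∑ j ∈ univ.erase i, lam j := by
      rw [← Finset.add_sum_erase _ _ (Finset.mem_univ i)]
      congr 1
      · simp [hlam']
      · exact Finset.sum_congr rfl fun j hj => by
          rw [hlam', Function.update_of_ne (Finset.ne_of_mem_erase hj)]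
    have d2 : ∑ j, lam j = lam i + ∑ j ∈ univ.erase i, lam j :=
      (Finset.add_sum_erase _ _ (Finset.mem_univ i)).symm
    have hsum' : ∑ j, lam' j = k := by omega
    obtain ⟨f', hf', hfs'⟩ := ih lam' hsum'
    refine ⟨Fin.cons (g i) f', ?_, ?_⟩
    · intro j
      refine Fin.cases ?_ (fun j' => hf' j') j
      exact ⟨gen_mem hgen i, hpos i⟩
    · rw [Fin.sum_cons, hfs']
      have e1 : ∑ j, lam' j * g j = (lam i - 1) * g i + ∑ j ∈ univ.erase i, lam j * g j := by
        rw [← Finset.add_sum_erase _ _ (Finset.mem_univ i)]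
        congr 1
        · simp [hlam']
        · exact Finset.sum_congr rfl fun j hj => by
            rw [hlam', Function.update_of_ne (Finset.ne_of_mem_erase hj)]
      have e2 : ∑ j, lam j * g j = lam i * g i + ∑ j ∈ univ.erase i, lam j * g j :=
        (Finset.add_sum_erase _ _ (Finset.mem_univ i)).symm
      have e3 : (lam i - 1) * g i + g i = lam i * g i := by
        obtain ⟨c, hc⟩ : ∃ c, lam i = c + 1 := ⟨lam i - 1, by omega⟩
        rw [hc, Nat.add_sub_cancel, add_mul, one_mul]
      omega

lemma P_to_rep (hgen : Generates S g) {h s : ℕ} (f : Fin h → ℕ)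
    (hf : ∀ j, f j ∈ S ∧ f j ≠ 0) (hsum : ∑ j, f j = s) :
    ∃ lam : Fin 3 → ℕ, ∑ i, lam i * g i = s ∧ h ≤ ∑ i, lam i := by
  have hLam : ∀ j : Fin h, ∃ mu : Fin 3 → ℕ, ∑ i, mu i * g i = f j :=
    fun j => (hgen _).1 (hf j).1
  choose mu hmu using hLam
  refine ⟨fun i => ∑ j, mu j i, ?_, ?_⟩
  · rw [show ∑ i, (∑ j, mu j i) * g i = ∑ j, ∑ i, mu j i * g i by
      rw [Finset.sum_comm]; exact Finset.sum_congr rfl fun i _ => Finset.sum_mul _ _ _]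
    rw [Finset.sum_congr rfl fun j _ => hmu j]
    exact hsum
  · rw [Finset.sum_comm]
    calc h = ∑ _j : Fin h, 1 := by simp
      _ ≤ ∑ j, ∑ i, mu j i := by
        refine Finset.sum_le_sum fun j _ => ?_
        by_contra hc
        push_neg at hc
        interval_cases hz : (∑ i, mu j i)
        have hz' : ∀ i, mu j i = 0 := fun i => Finset.sum_eq_zero_iff.1 hz i (Finset.mem_univ i)
        exact (hf j).2 (by rw [← hmu j]; simp [hz'])

lemma ord_ge_rep (hgen : Generates S g) (hpos : ∀ i, g i ≠ 0) (lam : Fin 3 → ℕ) (s : ℕ)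
    (h : ∑ i, lam i * g i = s) : ∑ i, lam i ≤ ordS S s := by
  obtain ⟨fw, hfw, hfs⟩ := rep_to_P hgen hpos (∑ i, lam i) lam rfl
  exact le_csSup ⟨s, fun x hx => ordset_bdd s hx⟩ ⟨fw, hfw, by rw [hfs, h]⟩

lemma max_rep_exists (hgen : Generates S g) (hpos : ∀ i, g i ≠ 0) {s : ℕ} (hs : s ∈ S) :
    ∃ lam : Fin 3 → ℕ, ∑ i, lam i * g i = s ∧ ∑ i, lam i = ordS S s := by
  obtain ⟨lam0, hlam0⟩ := (hgen s).1 hs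
  obtain ⟨f0, hf0, hf0s⟩ := rep_to_P hgen hpos _ lam0 rfl
  have hne : Set.Nonempty {h : ℕ | ∃ f : Fin h → ℕ, (∀ j, f j ∈ S ∧ f j ≠ 0) ∧ ∑ j, f j = s} :=
    ⟨∑ i, lam0 i, f0, hf0, by rw [hf0s, hlam0]⟩
  have hmem := Nat.sSup_mem hne ⟨s, fun x hx => ordset_bdd s hx⟩
  obtain ⟨fm, hfm, hfs⟩ := hmem
  obtain ⟨lam, hlam, hle⟩ := P_to_rep hgen fm hfm hfs
  exact ⟨lam, hlam, le_antisymm (ord_ge_rep hgen hpos lam s hlam) hle⟩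

lemma cancel_coeffs {x y : ℕ} (hxy : x < y) {l1 l2 m1 m2 : ℕ}
    (h : l1 * x + l2 * y = m1 * x + m2 * y) (hsum : l1 + l2 = m1 + m2) :
    l1 = m1 ∧ l2 = m2 := by
  rcases le_total m1 l1 with hle | hle
  · obtain ⟨d, rfl⟩ := Nat.exists_eq_add_of_le hle
    have hm2 : m2 = d + l2 := by omega
    subst hm2
    have h4 : d * x = d * y := by rw [add_mul, add_mul] at h; linarith
    rcases Nat.eq_zero_or_pos d with hd | hd
    · omega
    · exact absurd (Nat.eq_of_mul_eq_mul_left hd h4) (Nat.ne_of_lt hxy)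
  · obtain ⟨d, rfl⟩ := Nat.exists_eq_add_of_le hle
    have hl2 : l2 = d + m2 := by omega
    subst hl2
    have h4 : d * x = d * y := by rw [add_mul, add_mul] at h; linarith
    rcases Nat.eq_zero_or_pos d with hd | hd
    · omega
    · exact absurd (Nat.eq_of_mul_eq_mul_left hd h4) (Nat.ne_of_lt hxy)

end Aux

theorem three_gen_Mpure_symmetric_betaRect (S : Set ℕ) (g : Fin 3 → ℕ)
    (hS : IsNumSgp S) (hgen : MinimalGen S g) (hmono : StrictMono g)
    (hmpos : 0 < g 0) (hmul : ∀ s ∈ S, s ≠ 0 → g 0 ≤ s)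
    (f : ℕ) (hf : f ∉ S) (hfmax : ∀ n, f < n → n ∈ S)
    (hMpure : ∀ ω, InApery S (g 0) ω → predM S ω (f + g 0)) :
    UniqueMaxRep S g (f + g 0) ∧ AperySet S (g 0) = Bset S (g 0) g := by
  have hpos : ∀ i, g i ≠ 0 := by
    intro i
    have := hmono.monotone (Fin.zero_le i)
    omega
  have hxy : g 1 < g 2 := hmono (by decide)
  have h01 : g 0 < g 1 := hmono (by decide)
  have eS : f + g 0 ∈ S := hfmax _ (by omega)
  have eAp : InApery S (g 0) (f + g 0) := by
    refine ⟨eS, fun u hu h => ?_⟩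
    have : u = f := by omega
    exact hf (this ▸ hu)
  have apmax : ∀ ω, InApery S (g 0) ω → ω ≤ f + g 0 := by
    intro ω hω
    by_contra hlt
    push_neg at hlt
    exact hω.2 (ω - g 0) (hfmax _ (by omega)) (by omega)
  have ap_rep0 : ∀ ω, InApery S (g 0) ω → ∀ lam : Fin 3 → ℕ,
      ∑ i, lam i * g i = ω → lam 0 = 0 := by
    intro ω hω lam hlam
    by_contra h0
    have hrep := rep_mem hgen.1 ![lam 0 - 1, lam 1, lam 2]
    refine hω.2 _ hrep ?_
    rw [Fin.sum_univ_three] at hlam ⊢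
    simp only [Matrix.cons_val_zero, Matrix.cons_val_one, Matrix.head_cons,
      Matrix.cons_val_two, Matrix.tail_cons]
    have e3 : (lam 0 - 1) * g 0 + g 0 = lam 0 * g 0 := by
      obtain ⟨c, hc⟩ : ∃ c, lam 0 = c + 1 := ⟨lam 0 - 1, by omega⟩
      rw [hc, Nat.add_sub_cancel, add_mul, one_mul]
    omega
  -- the maximal representation of f + g 0
  obtain ⟨lamE, hlamE, hlamEn⟩ := max_rep_exists hgen.1 hpos eS
  have hE0 : lamE 0 = 0 := ap_rep0 _ eAp lamE hlamE
  have hab : lamE 1 * g 1 + lamE 2 * g 2 = f + g 0 := by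
    rw [Fin.sum_univ_three, hE0] at hlamE
    simpa using hlamE
  have hn : lamE 1 + lamE 2 = ordS S (f + g 0) := by
    rw [Fin.sum_univ_three, hE0] at hlamEn
    simpa using hlamEn
  have uniq : ∀ lam : Fin 3 → ℕ, IsMaxRep S g lam (f + g 0) → lam = lamE := by
    intro lam hlam
    have h0 : lam 0 = 0 := ap_rep0 _ eAp lam hlam.1
    have h1 : lam 1 * g 1 + lam 2 * g 2 = lamE 1 * g 1 + lamE 2 * g 2 := by
      have := hlam.1
      rw [Fin.sum_univ_three, h0] at this
      simp only [zero_mul, zero_add] at this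
      rw [this, hab]
    have h2 : lam 1 + lam 2 = lamE 1 + lamE 2 := by
      have := hlam.2
      rw [Fin.sum_univ_three, h0] at this
      omega
    obtain ⟨ha, hb⟩ := cancel_coeffs hxy h1 h2
    funext i
    fin_cases i
    · exact h0.trans hE0.symm
    · exact ha
    · exact hb
  have hUMR : UniqueMaxRep S g (f + g 0) := ⟨lamE, ⟨hlamE, hlamEn⟩, uniq⟩
  -- Every Apéry element has a maximal representation bounded by (lamE 1, lamE 2)
  have Mstep : ∀ ω, InApery S (g 0) ω → ∃ l1 l2 : ℕ, l1 ≤ lamE 1 ∧ l2 ≤ lamE 2 ∧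
      l1 * g 1 + l2 * g 2 = ω ∧ l1 + l2 = ordS S ω := by
    intro ω hω
    obtain ⟨u, huS, hωu, hord⟩ := hMpure ω hω
    obtain ⟨lam, hlam, hlamn⟩ := max_rep_exists hgen.1 hpos hω.1
    obtain ⟨mu, hmu, hmun⟩ := max_rep_exists hgen.1 hpos huS
    have hcomb : IsMaxRep S g (fun i => lam i + mu i) (f + g 0) := by
      constructor
      · rw [← hωu, ← hlam, ← hmu, ← Finset.sum_add_distrib]
        exact Finset.sum_congr rfl fun i _ => add_mul _ _ _
      · rw [Finset.sum_add_distrib, hlamn, hmun, hord]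
    have hcombE := uniq _ hcomb
    have h0 : lam 0 = 0 := ap_rep0 _ hω lam hlam
    have hc1 : lam 1 + mu 1 = lamE 1 := congrFun hcombE 1
    have hc2 : lam 2 + mu 2 = lamE 2 := congrFun hcombE 2
    refine ⟨lam 1, lam 2, by omega, by omega, ?_, ?_⟩
    · rw [Fin.sum_univ_three, h0] at hlam
      simpa using hlam
    · rw [Fin.sum_univ_three, h0] at hlamn
      omega
  -- β₁ = lamE 1 and β₂ = lamE 2
  have haS : lamE 1 * g 1 ∈ S := by
    have := rep_mem hgen.1 ![0, lamE 1, 0]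
    simpa [Fin.sum_univ_three] using this
  have hbS : lamE 2 * g 2 ∈ S := by
    have := rep_mem hgen.1 ![0, 0, lamE 2]
    simpa [Fin.sum_univ_three] using this
  have haAp : InApery S (g 0) (lamE 1 * g 1) := by
    refine ⟨haS, fun u hu h => ?_⟩
    exact eAp.2 (u + lamE 2 * g 2) (hS.2.1 u hu _ hbS) (by linarith)
  have hbAp : InApery S (g 0) (lamE 2 * g 2) := by
    refine ⟨hbS, fun u hu h => ?_⟩
    exact eAp.2 (u + lamE 1 * g 1) (hS.2.1 u hu _ haS) (by linarith)
  have hOrda : ordS S (lamE 1 * g 1) = lamE 1 := by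
    apply le_antisymm
    · obtain ⟨mu, hmu, hmun⟩ := max_rep_exists hgen.1 hpos haS
      have hrepE : ∑ i, (mu i + (![0, 0, lamE 2] : Fin 3 → ℕ) i) * g i = f + g 0 := by
        have : ∑ i, (mu i + (![0, 0, lamE 2] : Fin 3 → ℕ) i) * g i
            = ∑ i, mu i * g i + ∑ i, (![0, 0, lamE 2] : Fin 3 → ℕ) i * g i := by
          rw [← Finset.sum_add_distrib]
          exact Finset.sum_congr rfl fun i _ => add_mul _ _ _
        rw [this, hmu, Fin.sum_univ_three]
        simpa using hab
      have hle := ord_ge_rep hgen.1 hpos _ _ hrepE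
      rw [Finset.sum_add_distrib, hmun, Fin.sum_univ_three] at hle
      simp only [Matrix.cons_val_zero, Matrix.cons_val_one, Matrix.head_cons,
        Matrix.cons_val_two, Matrix.tail_cons] at hle
      omega
    · have := ord_ge_rep hgen.1 hpos ![0, lamE 1, 0] _
        (by simp [Fin.sum_univ_three] : ∑ i, (![0, lamE 1, 0] : Fin 3 → ℕ) i * g i = lamE 1 * g 1)
      simpa [Fin.sum_univ_three] using this
  have hOrdb : ordS S (lamE 2 * g 2) = lamE 2 := by
    apply le_antisymm
    · obtain ⟨mu, hmu, hmun⟩ := max_rep_exists hgen.1 hpos hbS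
      have hrepE : ∑ i, (mu i + (![0, lamE 1, 0] : Fin 3 → ℕ) i) * g i = f + g 0 := by
        have : ∑ i, (mu i + (![0, lamE 1, 0] : Fin 3 → ℕ) i) * g i
            = ∑ i, mu i * g i + ∑ i, (![0, lamE 1, 0] : Fin 3 → ℕ) i * g i := by
          rw [← Finset.sum_add_distrib]
          exact Finset.sum_congr rfl fun i _ => add_mul _ _ _
        rw [this, hmu, Fin.sum_univ_three]
        simp only [Matrix.cons_val_zero, Matrix.cons_val_one, Matrix.head_cons,
          Matrix.cons_val_two, Matrix.tail_cons, zero_mul, add_zero, zero_add]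
        omega
      have hle := ord_ge_rep hgen.1 hpos _ _ hrepE
      rw [Finset.sum_add_distrib, hmun, Fin.sum_univ_three] at hle
      simp only [Matrix.cons_val_zero, Matrix.cons_val_one, Matrix.head_cons,
        Matrix.cons_val_two, Matrix.tail_cons] at hle
      omega
    · have := ord_ge_rep hgen.1 hpos ![0, 0, lamE 2] _
        (by simp [Fin.sum_univ_three] : ∑ i, (![0, 0, lamE 2] : Fin 3 → ℕ) i * g i = lamE 2 * g 2)
      simpa [Fin.sum_univ_three] using this
  -- the β-sets
  have hBx_bdd : BddAbove {h : ℕ | InApery S (g 0) (h * g 1) ∧ ordS S (h * g 1) = h} := by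
    refine ⟨f + g 0, fun h hh => ?_⟩
    have h1 := apmax _ hh.1
    have h2 : h ≤ h * g 1 := Nat.le_mul_of_pos_right h (by omega)
    omega
  have hBy_bdd : BddAbove {h : ℕ | InApery S (g 0) (h * g 2) ∧ ordS S (h * g 2) = h} := by
    refine ⟨f + g 0, fun h hh => ?_⟩
    have h1 := apmax _ hh.1
    have h2 : h ≤ h * g 2 := Nat.le_mul_of_pos_right h (by omega)
    omega
  have haMem : lamE 1 ∈ {h : ℕ | InApery S (g 0) (h * g 1) ∧ ordS S (h * g 1) = h} :=
    ⟨haAp, hOrda⟩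
  have hbMem : lamE 2 ∈ {h : ℕ | InApery S (g 0) (h * g 2) ∧ ordS S (h * g 2) = h} :=
    ⟨hbAp, hOrdb⟩
  have hb1ge : lamE 1 ≤ betaN S (g 0) g 1 := le_csSup hBx_bdd haMem
  have hb2ge : lamE 2 ≤ betaN S (g 0) g 2 := le_csSup hBy_bdd hbMem
  have hb1mem := Nat.sSup_mem ⟨lamE 1, haMem⟩ hBx_bdd
  have hb2mem := Nat.sSup_mem ⟨lamE 2, hbMem⟩ hBy_bdd
  have hbdef1 : betaN S (g 0) g 1
      = sSup {h : ℕ | InApery S (g 0) (h * g 1) ∧ ordS S (h * g 1) = h} := rfl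
  have hb1 : betaN S (g 0) g 1 = lamE 1 := by
    rw [hbdef1]
    refine le_antisymm ?_ (hbdef1 ▸ hb1ge)
    obtain ⟨hApx, hOrdx⟩ := hb1mem
    obtain ⟨l1, l2, hl1, hl2, hval, hsum⟩ := Mstep _ hApx
    rw [hOrdx] at hsum
    have hx1 : sSup {h : ℕ | InApery S (g 0) (h * g 1) ∧ ordS S (h * g 1) = h} * g 1
        = l1 * g 1 + l2 * g 1 := by
      rw [← add_mul, hsum]
    have hx2 : l2 * g 2 = l2 * g 1 := by linarith
    rcases Nat.eq_zero_or_pos l2 with hz | hz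
    · omega
    · have := Nat.eq_of_mul_eq_mul_left hz hx2
      omega
  have hbdef2 : betaN S (g 0) g 2
      = sSup {h : ℕ | InApery S (g 0) (h * g 2) ∧ ordS S (h * g 2) = h} := rfl
  have hb2 : betaN S (g 0) g 2 = lamE 2 := by
    rw [hbdef2]
    refine le_antisymm ?_ (hbdef2 ▸ hb2ge)
    obtain ⟨hApy, hOrdy⟩ := hb2mem
    obtain ⟨l1, l2, hl1, hl2, hval, hsum⟩ := Mstep _ hApy
    rw [hOrdy] at hsum
    have hx1 : sSup {h : ℕ | InApery S (g 0) (h * g 2) ∧ ordS S (h * g 2) = h} * g 2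
        = l1 * g 2 + l2 * g 2 := by
      rw [← add_mul, hsum]
    have hx2 : l1 * g 1 = l1 * g 2 := by linarith
    rcases Nat.eq_zero_or_pos l1 with hz | hz
    · omega
    · have := Nat.eq_of_mul_eq_mul_left hz hx2
      omega
  refine ⟨hUMR, ?_⟩
  ext s
  simp only [AperySet, Bset, Set.mem_setOf_eq]
  constructor
  · intro hsAp
    obtain ⟨l1, l2, hl1, hl2, hval, _⟩ := Mstep s hsAp
    refine ⟨![0, l1, l2], by simp, ?_, ?_⟩
    · intro i
      fin_cases i
      · simp
      · simpa using hb1 ▸ hl1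
      · simpa using hb2 ▸ hl2
    · rw [Fin.sum_univ_three]
      simpa using hval
  · rintro ⟨lam, h0, hle, hsum⟩
    have hl1 : lam 1 ≤ lamE 1 := hb1 ▸ hle 1
    have hl2 : lam 2 ≤ lamE 2 := hb2 ▸ hle 2
    have sS : s ∈ S := hsum ▸ rep_mem hgen.1 lam
    have hsval : lam 1 * g 1 + lam 2 * g 2 = s := by
      rw [Fin.sum_univ_three, h0] at hsum
      simpa using hsum
    have huS : (lamE 1 - lam 1) * g 1 + (lamE 2 - lam 2) * g 2 ∈ S := by
      have := rep_mem hgen.1 ![0, lamE 1 - lam 1, lamE 2 - lam 2]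
      simpa [Fin.sum_univ_three] using this
    have hsu : s + ((lamE 1 - lam 1) * g 1 + (lamE 2 - lam 2) * g 2) = f + g 0 := by
      have e1 : lam 1 * g 1 + (lamE 1 - lam 1) * g 1 = lamE 1 * g 1 := by
        rw [← add_mul]; congr 1; omega
      have e2 : lam 2 * g 2 + (lamE 2 - lam 2) * g 2 = lamE 2 * g 2 := by
        rw [← add_mul]; congr 1; omega
      linarith
    refine ⟨sS, fun t ht hts => ?_⟩
    refine eAp.2 (t + ((lamE 1 - lam 1) * g 1 + (lamE 2 - lam 2) * g 2))
      (hS.2.1 t ht _ huS) ?_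
    omega
end
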